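/- arXiv:1508.05114 — 9 statements merged into one kernel-verified Lean document; each statement's English description precedes it below -/
import Mathlib

section
/- Suppose the maps M_{xy}, M_{x0}, M_{0y} satisfy conditions (i) Continuity, (ii) Monotonicity and (iii) Limits. Then there exist u ∈ ℝ^X and v ∈ ℝ^Y solving the nonlinear Bernstein–Schrödinger system: M_{x0}(u_x) + Σ_{y∈Y} M_{xy}(u_x, v_y) = n_x for every x ∈ X and M_{0y}(v_y) + Σ_{x∈X} M_{xy}(u_x, v_y) = m_y for every y ∈ Y. -/
open Filter Topology

private lemma bddAbove_solve {f : ℝ → ℝ} {t : ℝ} (ha : Antitone f)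
    (hlt : ∃ u, f u < t) : BddAbove {u | t ≤ f u} := by
  obtain ⟨b, hb⟩ := hlt
  refine ⟨b, fun u hu => ?_⟩
  by_contra h
  push_neg at h
  exact absurd (hu.trans (ha h.le)) (not_le.2 hb)

private lemma csSup_solve {f : ℝ → ℝ} {t : ℝ} (hc : Continuous f) (ha : Antitone f)
    (hne : ∃ u, t ≤ f u) (hlt : ∃ u, f u < t) :
    f (sSup {u | t ≤ f u}) = t := by
  have hbdd : BddAbove {u | t ≤ f u} := bddAbove_solve ha hlt
  have hclosed : IsClosed {u | t ≤ f u} := isClosed_le continuous_const hc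
  have hmem : sSup {u | t ≤ f u} ∈ {u | t ≤ f u} := hclosed.csSup_mem hne hbdd
  refine le_antisymm ?_ hmem
  by_contra h
  push_neg at h
  have hev : ∀ᶠ u in 𝓝 (sSup {u | t ≤ f u}), t < f u :=
    (hc.tendsto _).eventually (eventually_gt_nhds h)
  obtain ⟨u, htu, hu⟩ :=
    (((hev.filter_mono nhdsWithin_le_nhds).and self_mem_nhdsWithin) :
      ∀ᶠ u in 𝓝[>] (sSup {u | t ≤ f u}), t < f u ∧ u ∈ Set.Ioi (sSup {u | t ≤ f u})).exists
  exact absurd (le_csSup hbdd htu.le) (not_le.2 hu)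

set_option maxHeartbeats 1000000 in
/-- Existence of a solution to the nonlinear Bernstein–Schrödinger system under
continuity, monotonicity and limit conditions. -/
theorem bernstein_schrodinger_existence
    {X Y : Type*} [Fintype X] [Fintype Y]
    (n : X → ℝ) (m : Y → ℝ) (hn : ∀ x, 0 < n x) (hm : ∀ y, 0 < m y)
    (M : X → Y → ℝ → ℝ → ℝ) (Mx0 : X → ℝ → ℝ) (M0y : Y → ℝ → ℝ)
    -- (i) Continuity
    (hMcont : ∀ x y, Continuous fun p : ℝ × ℝ => M x y p.1 p.2)
    (hMx0cont : ∀ x, Continuous (Mx0 x))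
    (hM0ycont : ∀ y, Continuous (M0y y))
    -- (ii) Monotonicity
    (hMmono : ∀ x y (u u' v v' : ℝ), u ≤ u' → v ≤ v' → M x y u' v' ≤ M x y u v)
    (hMx0mono : ∀ x, Antitone (Mx0 x))
    (hM0ymono : ∀ y, Antitone (M0y y))
    -- (iii) Limits
    (hMtop1 : ∀ x y v, Tendsto (fun u => M x y u v) atTop (𝓝 0))
    (hMbot1 : ∀ x y v, Tendsto (fun u => M x y u v) atBot atTop)
    (hMtop2 : ∀ x y u, Tendsto (fun v => M x y u v) atTop (𝓝 0))
    (hMbot2 : ∀ x y u, Tendsto (fun v => M x y u v) atBot atTop)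
    (hMx0top : ∀ x, Tendsto (Mx0 x) atTop (𝓝 0))
    (hMx0bot : ∀ x, Tendsto (Mx0 x) atBot atTop)
    (hM0ytop : ∀ y, Tendsto (M0y y) atTop (𝓝 0))
    (hM0ybot : ∀ y, Tendsto (M0y y) atBot atTop) :
    ∃ (u : X → ℝ) (v : Y → ℝ),
      (∀ x, Mx0 x (u x) + ∑ y, M x y (u x) (v y) = n x) ∧
      (∀ y, M0y y (v y) + ∑ x, M x y (u x) (v y) = m y) := by
  classical
  -- nonnegativity
  have hMnn : ∀ x y u v, 0 ≤ M x y u v := fun x y u v =>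
    le_of_tendsto (hMtop1 x y v)
      (eventually_atTop.2 ⟨u, fun b hb => hMmono x y u b v v hb le_rfl⟩)
  -- the two "margin" maps
  set F : (Y → ℝ) → X → ℝ → ℝ := fun v x u => Mx0 x u + ∑ y, M x y u (v y) with hF
  set G : (X → ℝ) → Y → ℝ → ℝ := fun u y v => M0y y v + ∑ x, M x y (u x) v with hG
  have hFcont : ∀ v x, Continuous (F v x) := fun v x =>
    (hMx0cont x).add (continuous_finset_sum _ fun y _ =>
      (hMcont x y).comp (continuous_id.prodMk continuous_const))
  have hGcont : ∀ u y, Continuous (G u y) := fun u y =>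
    (hM0ycont y).add (continuous_finset_sum _ fun x _ =>
      (hMcont x y).comp (continuous_const.prodMk continuous_id))
  have hFanti : ∀ v x, Antitone (F v x) := fun v x u u' h =>
    add_le_add (hMx0mono x h)
      (Finset.sum_le_sum fun y _ => hMmono x y u u' (v y) (v y) h le_rfl)
  have hGanti : ∀ u y, Antitone (G u y) := fun u y v v' h =>
    add_le_add (hM0ymono y h)
      (Finset.sum_le_sum fun x _ => hMmono x y (u x) (u x) v v' le_rfl h)
  have hFmono : ∀ x u (v v' : Y → ℝ), v ≤ v' → F v' x u ≤ F v x u := fun x u v v' h =>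
    add_le_add le_rfl
      (Finset.sum_le_sum fun y _ => hMmono x y u u (v y) (v' y) le_rfl (h y))
  have hGmono : ∀ y v (u u' : X → ℝ), u ≤ u' → G u' y v ≤ G u y v := fun y v u u' h =>
    add_le_add le_rfl
      (Finset.sum_le_sum fun x _ => hMmono x y (u x) (u' x) v v (h x) le_rfl)
  have hFtop : ∀ v x, Tendsto (F v x) atTop (𝓝 0) := fun v x => by
    have h : Tendsto (F v x) atTop (𝓝 (0 + ∑ y : Y, (0 : ℝ))) :=
      (hMx0top x).add (tendsto_finset_sum _ fun y _ => hMtop1 x y (v y))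
    simpa using h
  have hGtop : ∀ u y, Tendsto (G u y) atTop (𝓝 0) := fun u y => by
    have h : Tendsto (G u y) atTop (𝓝 (0 + ∑ x : X, (0 : ℝ))) :=
      (hM0ytop y).add (tendsto_finset_sum _ fun x _ => hMtop2 x y (u x))
    simpa using h
  have hFbot : ∀ v x, Tendsto (F v x) atBot atTop := fun v x =>
    tendsto_atTop_mono
      (fun u => le_add_of_nonneg_right (Finset.sum_nonneg fun y _ => hMnn x y u (v y)))
      (hMx0bot x)
  have hGbot : ∀ u y, Tendsto (G u y) atBot atTop := fun u y =>
    tendsto_atTop_mono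
      (fun v => le_add_of_nonneg_right (Finset.sum_nonneg fun x _ => hMnn x y (u x) v))
      (hM0ybot y)
  have hFex : ∀ v x, ∃ u, n x ≤ F v x u := fun v x =>
    ((hFbot v x).eventually_ge_atTop (n x)).exists
  have hFlt : ∀ v x, ∃ u, F v x u < n x := fun v x =>
    ((hFtop v x).eventually (eventually_lt_nhds (hn x))).exists
  have hGex : ∀ u y, ∃ v, m y ≤ G u y v := fun u y =>
    ((hGbot u y).eventually_ge_atTop (m y)).exists
  have hGlt : ∀ u y, ∃ v, G u y v < m y := fun u y =>
    ((hGtop u y).eventually (eventually_lt_nhds (hm y))).exists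
  -- the solving maps
  set U : (Y → ℝ) → X → ℝ := fun v x => sSup {u | n x ≤ F v x u} with hU
  set W : (X → ℝ) → Y → ℝ := fun u y => sSup {v | m y ≤ G u y v} with hW
  have hUeq : ∀ v x, F v x (U v x) = n x := fun v x =>
    csSup_solve (hFcont v x) (hFanti v x) (hFex v x) (hFlt v x)
  have hWeq : ∀ u y, G u y (W u y) = m y := fun u y =>
    csSup_solve (hGcont u y) (hGanti u y) (hGex u y) (hGlt u y)
  have hUanti : ∀ (v v' : Y → ℝ) x, v ≤ v' → U v' x ≤ U v x := fun v v' x h =>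
    csSup_le_csSup (bddAbove_solve (hFanti v x) (hFlt v x)) (hFex v' x)
      (fun u hu => hu.trans (hFmono x u v v' h))
  have hWanti : ∀ (u u' : X → ℝ) y, u ≤ u' → W u' y ≤ W u y := fun u u' y h =>
    csSup_le_csSup (bddAbove_solve (hGanti u y) (hGlt u y)) (hGex u' y)
      (fun v hv => hv.trans (hGmono y v u u' h))
  -- uniform lower bounds
  choose a ha using fun x => ((hMx0bot x).eventually_gt_atTop (n x)).exists
  choose b hb using fun y => ((hM0ybot y).eventually_gt_atTop (m y)).exists
  have hUlb : ∀ v x, a x ≤ U v x := by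
    intro v x
    by_contra h
    push_neg at h
    have h1 : Mx0 x (U v x) ≤ n x := by
      have h0 : Mx0 x (U v x) ≤ F v x (U v x) := by
        simp only [hF]
        exact le_add_of_nonneg_right (Finset.sum_nonneg fun y _ => hMnn x y (U v x) (v y))
      rwa [hUeq v x] at h0
    exact absurd ((hMx0mono x h.le).trans h1) (not_le.2 (ha x))
  have hWlb : ∀ u y, b y ≤ W u y := by
    intro u y
    by_contra h
    push_neg at h
    have h1 : M0y y (W u y) ≤ m y := by
      have h0 : M0y y (W u y) ≤ G u y (W u y) := by
        simp only [hG]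
        exact le_add_of_nonneg_right (Finset.sum_nonneg fun x _ => hMnn x y (u x) (W u y))
      rwa [hWeq u y] at h0
    exact absurd ((hM0ymono y h.le).trans h1) (not_le.2 (hb y))
  -- upper bounds
  choose c hc using fun y => ((hGtop a y).eventually (eventually_lt_nhds (hm y))).exists
  have hWub : ∀ u y, a ≤ u → W u y ≤ c y := by
    intro u y hau
    by_contra h
    push_neg at h
    have h1 : m y ≤ G u y (c y) := (hWeq u y) ▸ hGanti u y h.le
    exact absurd (h1.trans (hGmono y (c y) a u hau)) (not_le.2 (hc y))
  -- the iteration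
  set vs : ℕ → Y → ℝ := fun k => Nat.rec b (fun _ vk => W (U vk)) k with hvs
  set us : ℕ → X → ℝ := fun k => U (vs k) with hus
  have hvsS : ∀ k, vs (k + 1) = W (us k) := fun k => rfl
  have hvstep : ∀ k, vs k ≤ vs (k + 1) := by
    intro k
    induction k with
    | zero => exact fun y => hWlb (us 0) y
    | succ k ih =>
      have h1 : us (k + 1) ≤ us k := fun x => hUanti _ _ x ih
      exact fun y => hWanti _ _ y h1
  have hustep : ∀ k, us (k + 1) ≤ us k := fun k x => hUanti _ _ x (hvstep k)
  have hvmono : ∀ y, Monotone fun k => vs k y := fun y =>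
    monotone_nat_of_le_succ fun k => hvstep k y
  have humono : ∀ x, Antitone fun k => us k x := fun x =>
    antitone_nat_of_succ_le fun k => hustep k x
  have huslb : ∀ k x, a x ≤ us k x := fun k x => hUlb _ x
  have hvsub : ∀ k y, vs k y ≤ max (b y) (c y) := by
    intro k y
    cases k with
    | zero => exact le_max_left _ _
    | succ k => exact le_max_of_le_right (hWub (us k) y (huslb k))
  -- limits
  set vL : Y → ℝ := fun y => ⨆ k, vs k y with hvL
  set uL : X → ℝ := fun x => ⨅ k, us k x with huL
  have hvlim : ∀ y, Tendsto (fun k => vs k y) atTop (𝓝 (vL y)) := fun y =>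
    tendsto_atTop_ciSup (hvmono y) ⟨max (b y) (c y), by
      rintro z ⟨k, rfl⟩; exact hvsub k y⟩
  have hulim : ∀ x, Tendsto (fun k => us k x) atTop (𝓝 (uL x)) := fun x =>
    tendsto_atTop_ciInf (humono x) ⟨a x, by
      rintro z ⟨k, rfl⟩; exact huslb k x⟩
  refine ⟨uL, vL, ?_, ?_⟩
  · intro x
    have hseq : ∀ k, Mx0 x (us k x) + ∑ y, M x y (us k x) (vs k y) = n x := fun k =>
      hUeq (vs k) x
    have hlim : Tendsto (fun k => Mx0 x (us k x) + ∑ y, M x y (us k x) (vs k y)) atTop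
        (𝓝 (Mx0 x (uL x) + ∑ y, M x y (uL x) (vL y))) :=
      (((hMx0cont x).tendsto _).comp (hulim x)).add
        (tendsto_finset_sum _ fun y _ =>
          ((hMcont x y).tendsto (uL x, vL y)).comp ((hulim x).prodMk_nhds (hvlim y)))
    have hconst : Tendsto (fun k => Mx0 x (us k x) + ∑ y, M x y (us k x) (vs k y)) atTop
        (𝓝 (n x)) := by
      simp only [hseq]
      exact tendsto_const_nhds
    exact tendsto_nhds_unique hlim hconst
  · intro y
    have hseq : ∀ k, M0y y (vs (k + 1) y) + ∑ x, M x y (us k x) (vs (k + 1) y) = m y :=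
      fun k => hWeq (us k) y
    have hvlim' : Tendsto (fun k => vs (k + 1) y) atTop (𝓝 (vL y)) :=
      (hvlim y).comp (tendsto_add_atTop_nat 1)
    have hlim : Tendsto (fun k => M0y y (vs (k + 1) y) + ∑ x, M x y (us k x) (vs (k + 1) y))
        atTop (𝓝 (M0y y (vL y) + ∑ x, M x y (uL x) (vL y))) :=
      (((hM0ycont y).tendsto _).comp hvlim').add
        (tendsto_finset_sum _ fun x _ =>
          ((hMcont x y).tendsto (uL x, vL y)).comp ((hulim x).prodMk_nhds hvlim'))
    have hconst : Tendsto (fun k => M0y y (vs (k + 1) y) + ∑ x, M x y (us k x) (vs (k + 1) y))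
        atTop (𝓝 (m y)) := by
      simp only [hseq]
      exact tendsto_const_nhds
    exact tendsto_nhds_unique hlim hconst
end

section
/- Suppose the maps M_{xy}, M_{x0}, M_{0y} satisfy conditions (i) Continuity, (ii) Monotonicity and (iii) Limits, and are moreover continuously differentiable with M_{x0} and M_{0y} strictly decreasing. Then the nonlinear Bernstein–Schrödinger system has at most one solution (u, v) ∈ ℝ^X × ℝ^Y. -/
open Filter Topology

private lemma exists_unique_root (f : ℝ → ℝ) (hf : Continuous f) (hs : StrictAnti f)
    (h1 : Tendsto f atBot atTop) (h2 : Tendsto f atTop (𝓝 0)) {n : ℝ} (hn : 0 < n) :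
    ∃! t, f t = n := by
  obtain ⟨a, ha⟩ := (h1.eventually_ge_atTop n).exists
  obtain ⟨b, hb⟩ := (h2.eventually_lt_const hn).exists
  have hmem : n ∈ Set.uIcc (f a) (f b) := Set.mem_uIcc.2 (Or.inr ⟨hb.le, ha⟩)
  obtain ⟨t, _, ht⟩ := intermediate_value_uIcc hf.continuousOn hmem
  exact ⟨t, ht, fun s hs' => hs.injective (hs'.trans ht.symm)⟩

/-- Uniqueness of the solution to the nonlinear Bernstein–Schrödinger system when the
maps are moreover continuously differentiable, with `M_{x0}` and `M_{0y}` strictly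
decreasing. -/
theorem bernstein_schrodinger_uniqueness
    {X Y : Type*} [Fintype X] [Fintype Y]
    (n : X → ℝ) (m : Y → ℝ) (hn : ∀ x, 0 < n x) (hm : ∀ y, 0 < m y)
    (M : X → Y → ℝ → ℝ → ℝ) (Mx0 : X → ℝ → ℝ) (M0y : Y → ℝ → ℝ)
    -- (i) Continuity
    (hMcont : ∀ x y, Continuous fun p : ℝ × ℝ => M x y p.1 p.2)
    (hMx0cont : ∀ x, Continuous (Mx0 x))
    (hM0ycont : ∀ y, Continuous (M0y y))
    -- (ii) Monotonicity
    (hMmono : ∀ x y (u u' v v' : ℝ), u ≤ u' → v ≤ v' → M x y u' v' ≤ M x y u v)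
    (hMx0mono : ∀ x, Antitone (Mx0 x))
    (hM0ymono : ∀ y, Antitone (M0y y))
    -- (iii) Limits
    (hMtop1 : ∀ x y v, Tendsto (fun u => M x y u v) atTop (𝓝 0))
    (hMbot1 : ∀ x y v, Tendsto (fun u => M x y u v) atBot atTop)
    (hMtop2 : ∀ x y u, Tendsto (fun v => M x y u v) atTop (𝓝 0))
    (hMbot2 : ∀ x y u, Tendsto (fun v => M x y u v) atBot atTop)
    (hMx0top : ∀ x, Tendsto (Mx0 x) atTop (𝓝 0))
    (hMx0bot : ∀ x, Tendsto (Mx0 x) atBot atTop)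
    (hM0ytop : ∀ y, Tendsto (M0y y) atTop (𝓝 0))
    (hM0ybot : ∀ y, Tendsto (M0y y) atBot atTop)
    -- continuous differentiability
    (hMC1 : ∀ x y, ContDiff ℝ 1 fun p : ℝ × ℝ => M x y p.1 p.2)
    (hMx0C1 : ∀ x, ContDiff ℝ 1 (Mx0 x))
    (hM0yC1 : ∀ y, ContDiff ℝ 1 (M0y y))
    -- strict monotonicity of the singles terms
    (hMx0strict : ∀ x, StrictAnti (Mx0 x))
    (hM0ystrict : ∀ y, StrictAnti (M0y y))
    -- two solutions of the system
    (u u' : X → ℝ) (v v' : Y → ℝ)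
    (hu : ∀ x, Mx0 x (u x) + ∑ y, M x y (u x) (v y) = n x)
    (hv : ∀ y, M0y y (v y) + ∑ x, M x y (u x) (v y) = m y)
    (hu' : ∀ x, Mx0 x (u' x) + ∑ y, M x y (u' x) (v' y) = n x)
    (hv' : ∀ y, M0y y (v' y) + ∑ x, M x y (u' x) (v' y) = m y) :
    u = u' ∧ v = v' := by
  classical
  -- M is nonnegative
  have hMnn : ∀ x y a b, 0 ≤ M x y a b := by
    intro x y a b
    refine le_of_tendsto (hMtop1 x y b) ?_
    exact eventually_atTop.2 ⟨a, fun t ht => hMmono x y a t b b ht le_rfl⟩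
  -- coordinate solver for the x-equations
  have hUex : ∀ (w : Y → ℝ) (x : X),
      ∃! t, Mx0 x t + ∑ y, M x y t (w y) = n x := by
    intro w x
    refine exists_unique_root _ ?_ ?_ ?_ ?_ (hn x)
    · exact (hMx0cont x).add (continuous_finset_sum _ fun y _ =>
        (hMcont x y).comp (continuous_id.prodMk continuous_const))
    · intro a b hab
      exact add_lt_add_of_lt_of_le (hMx0strict x hab)
        (Finset.sum_le_sum fun y _ => hMmono x y a b (w y) (w y) hab.le le_rfl)
    · refine tendsto_atTop_mono (fun t => ?_) (hMx0bot x)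
      exact le_add_of_nonneg_right (Finset.sum_nonneg fun y _ => hMnn x y t (w y))
    · simpa using (hMx0top x).add
        (tendsto_finset_sum Finset.univ fun y _ => hMtop1 x y (w y))
  -- coordinate solver for the y-equations
  have hVex : ∀ (p : X → ℝ) (y : Y),
      ∃! t, M0y y t + ∑ x, M x y (p x) t = m y := by
    intro p y
    refine exists_unique_root _ ?_ ?_ ?_ ?_ (hm y)
    · exact (hM0ycont y).add (continuous_finset_sum _ fun x _ =>
        (hMcont x y).comp (continuous_const.prodMk continuous_id))
    · intro a b hab
      exact add_lt_add_of_lt_of_le (hM0ystrict y hab)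
        (Finset.sum_le_sum fun x _ => hMmono x y (p x) (p x) a b le_rfl hab.le)
    · refine tendsto_atTop_mono (fun t => ?_) (hM0ybot y)
      exact le_add_of_nonneg_right (Finset.sum_nonneg fun x _ => hMnn x y (p x) t)
    · simpa using (hM0ytop y).add
        (tendsto_finset_sum Finset.univ fun x _ => hMtop2 x y (p x))
  choose U hUe hUu using hUex
  choose V hVe hVu using hVex
  -- antitonicity of the solvers
  have hUanti : ∀ q q' : Y → ℝ, (∀ y, q y ≤ q' y) → ∀ x, U q' x ≤ U q x := by
    intro q q' hqq x
    by_contra hcon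
    push_neg at hcon
    have key : n x ≤ Mx0 x (U q' x) + ∑ y, M x y (U q' x) (q y) := by
      calc n x = Mx0 x (U q' x) + ∑ y, M x y (U q' x) (q' y) := (hUe q' x).symm
        _ ≤ _ := add_le_add_right
              (Finset.sum_le_sum fun y _ => hMmono x y _ _ _ _ le_rfl (hqq y)) _
    have hlt : Mx0 x (U q' x) + ∑ y, M x y (U q' x) (q y)
        < Mx0 x (U q x) + ∑ y, M x y (U q x) (q y) :=
      add_lt_add_of_lt_of_le (hMx0strict x hcon)
        (Finset.sum_le_sum fun y _ => hMmono x y _ _ _ _ hcon.le le_rfl)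
    rw [hUe q x] at hlt
    linarith
  have hVanti : ∀ p p' : X → ℝ, (∀ x, p x ≤ p' x) → ∀ y, V p' y ≤ V p y := by
    intro p p' hpp y
    by_contra hcon
    push_neg at hcon
    have key : m y ≤ M0y y (V p' y) + ∑ x, M x y (p x) (V p' y) := by
      calc m y = M0y y (V p' y) + ∑ x, M x y (p' x) (V p' y) := (hVe p' y).symm
        _ ≤ _ := add_le_add_right
              (Finset.sum_le_sum fun x _ => hMmono x y _ _ _ _ (hpp x) le_rfl) _
    have hlt : M0y y (V p' y) + ∑ x, M x y (p x) (V p' y)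
        < M0y y (V p y) + ∑ x, M x y (p x) (V p y) :=
      add_lt_add_of_lt_of_le (hM0ystrict y hcon)
        (Finset.sum_le_sum fun x _ => hMmono x y _ _ _ _ le_rfl hcon.le)
    rw [hVe p y] at hlt
    linarith
  -- our solutions are fixed by the solvers
  have hUv : ∀ x, U v x = u x := fun x => (hUu v x (u x) (hu x)).symm
  have hUv' : ∀ x, U v' x = u' x := fun x => (hUu v' x (u' x) (hu' x)).symm
  have hVu2 : ∀ y, V u y = v y := fun y => (hVu u y (v y) (hv y)).symm
  have hVu2' : ∀ y, V u' y = v' y := fun y => (hVu u' y (v' y) (hv' y)).symm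
  -- a uniform lower bound for V
  obtain ⟨c, hc⟩ : ∃ c : Y → ℝ, ∀ y, m y < M0y y (c y) := by
    have h : ∀ y, ∃ t, m y < M0y y t :=
      fun y => ((hM0ybot y).eventually_gt_atTop (m y)).exists
    exact ⟨fun y => (h y).choose, fun y => (h y).choose_spec⟩
  have hVlb : ∀ (p : X → ℝ) (y : Y), c y ≤ V p y := by
    intro p y
    by_contra hcon
    push_neg at hcon
    have h1 : M0y y (V p y) ≤ m y := by
      have e := hVe p y
      have hs := Finset.sum_nonneg fun x (_ : x ∈ Finset.univ) => hMnn x y (p x) (V p y)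
      linarith
    have h2 : M0y y (c y) ≤ M0y y (V p y) := hM0ymono y hcon.le
    linarith [hc y]
  -- uniform upper bound for G := U ∘ V
  have hGb : ∀ (p : X → ℝ) (x : X), U (V p) x ≤ U c x :=
    fun p x => hUanti c (V p) (hVlb p) x
  -- the lower corner
  set lo : X → ℝ := fun x => max (u x) (u' x) with hlo_def
  have hVlo_v : ∀ y, V lo y ≤ v y := by
    intro y; rw [← hVu2 y]; exact hVanti u lo (fun x => le_max_left _ _) y
  have hVlo_v' : ∀ y, V lo y ≤ v' y := by
    intro y; rw [← hVu2' y]; exact hVanti u' lo (fun x => le_max_right _ _) y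
  have hloG : ∀ x, lo x ≤ U (V lo) x := by
    intro x
    refine max_le ?_ ?_
    · rw [← hUv x]; exact hUanti (V lo) v hVlo_v x
    · rw [← hUv' x]; exact hUanti (V lo) v' hVlo_v' x
  -- Tarski-style maximal post-fixed point
  set S : Set (X → ℝ) :=
    {w : X → ℝ | (∀ x, lo x ≤ w x) ∧ ∀ x, w x ≤ U (V w) x} with hS_def
  have hloS : lo ∈ S := ⟨fun x => le_rfl, hloG⟩
  have hbdd : ∀ x : X, BddAbove ((fun w : X → ℝ => w x) '' S) := by
    intro x
    refine ⟨U c x, ?_⟩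
    rintro t ⟨w, hw, rfl⟩
    exact (hw.2 x).trans (hGb w x)
  have hne : ∀ x : X, ((fun w : X → ℝ => w x) '' S).Nonempty :=
    fun x => ⟨lo x, lo, hloS, rfl⟩
  set wstar : X → ℝ := fun x => sSup ((fun w : X → ℝ => w x) '' S) with hws_def
  have hle_wstar : ∀ w ∈ S, ∀ x, w x ≤ wstar x :=
    fun w hw x => le_csSup (hbdd x) ⟨w, hw, rfl⟩
  have hlo_wstar : ∀ x, lo x ≤ wstar x := hle_wstar lo hloS
  have hwstar_le : ∀ x, wstar x ≤ U (V wstar) x := by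
    intro x
    refine csSup_le (hne x) ?_
    rintro t ⟨w, hw, rfl⟩
    calc w x ≤ U (V w) x := hw.2 x
      _ ≤ U (V wstar) x :=
          hUanti (V wstar) (V w) (hVanti w wstar (hle_wstar w hw)) x
  have hGS : U (V wstar) ∈ S := by
    constructor
    · exact fun x => (hlo_wstar x).trans (hwstar_le x)
    · intro x
      exact hUanti (V (U (V wstar))) (V wstar)
        (hVanti wstar (U (V wstar)) hwstar_le) x
  have hfix : ∀ x, U (V wstar) x = wstar x :=
    fun x => le_antisymm (hle_wstar _ hGS x) (hwstar_le x)
  -- (wstar, V wstar) is a solution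
  have hws_eq : ∀ x, Mx0 x (wstar x) + ∑ y, M x y (wstar x) (V wstar y) = n x := by
    intro x
    have e := hUe (V wstar) x
    rwa [hfix x] at e
  have hvs_eq : ∀ y, M0y y (V wstar y) + ∑ x, M x y (wstar x) (V wstar y) = m y :=
    fun y => hVe wstar y
  -- comparison of a mixed-ordered pair of solutions via total mass
  have mixed : ∀ (p : X → ℝ) (q : Y → ℝ),
      (∀ x, Mx0 x (p x) + ∑ y, M x y (p x) (q y) = n x) →
      (∀ y, M0y y (q y) + ∑ x, M x y (p x) (q y) = m y) →
      (∀ x, p x ≤ wstar x) → (∀ y, V wstar y ≤ q y) →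
      p = wstar ∧ q = V wstar := by
    intro p q hp hq hpw hwq
    have mass : ∀ (P : X → ℝ) (Q : Y → ℝ),
        (∀ x, Mx0 x (P x) + ∑ y, M x y (P x) (Q y) = n x) →
        (∀ y, M0y y (Q y) + ∑ x, M x y (P x) (Q y) = m y) →
        (∑ x, Mx0 x (P x)) - (∑ y, M0y y (Q y)) = (∑ x, n x) - (∑ y, m y) := by
      intro P Q hP hQ
      have e1 : ∑ x, (Mx0 x (P x) + ∑ y, M x y (P x) (Q y)) = ∑ x, n x :=
        Finset.sum_congr rfl fun x _ => hP x
      have e2 : ∑ y, (M0y y (Q y) + ∑ x, M x y (P x) (Q y)) = ∑ y, m y :=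
        Finset.sum_congr rfl fun y _ => hQ y
      rw [Finset.sum_add_distrib] at e1 e2
      rw [Finset.sum_comm] at e2
      linarith
    have m1 := mass p q hp hq
    have m2 := mass wstar (V wstar) hws_eq hvs_eq
    have hA : ∀ x, 0 ≤ Mx0 x (p x) - Mx0 x (wstar x) :=
      fun x => sub_nonneg.2 (hMx0mono x (hpw x))
    have hB : ∀ y, 0 ≤ M0y y (V wstar y) - M0y y (q y) :=
      fun y => sub_nonneg.2 (hM0ymono y (hwq y))
    have key : (∑ x, (Mx0 x (p x) - Mx0 x (wstar x)))
        + (∑ y, (M0y y (V wstar y) - M0y y (q y))) = 0 := by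
      rw [Finset.sum_sub_distrib, Finset.sum_sub_distrib]
      linarith
    have hsA : ∑ x, (Mx0 x (p x) - Mx0 x (wstar x)) = 0 := by
      have h1 : 0 ≤ ∑ x, (Mx0 x (p x) - Mx0 x (wstar x)) :=
        Finset.sum_nonneg fun x _ => hA x
      have h2 : 0 ≤ ∑ y, (M0y y (V wstar y) - M0y y (q y)) :=
        Finset.sum_nonneg fun y _ => hB y
      linarith
    have hsB : ∑ y, (M0y y (V wstar y) - M0y y (q y)) = 0 := by
      have h1 : 0 ≤ ∑ x, (Mx0 x (p x) - Mx0 x (wstar x)) :=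
        Finset.sum_nonneg fun x _ => hA x
      linarith
    have hAz := (Finset.sum_eq_zero_iff_of_nonneg (fun x _ => hA x)).1 hsA
    have hBz := (Finset.sum_eq_zero_iff_of_nonneg (fun y _ => hB y)).1 hsB
    constructor
    · funext x
      have := hAz x (Finset.mem_univ x)
      exact (hMx0strict x).injective (by linarith)
    · funext y
      have := hBz y (Finset.mem_univ y)
      exact ((hM0ystrict y).injective (by linarith)).symm
  have hu_le : ∀ x, u x ≤ wstar x := fun x => (le_max_left _ _).trans (hlo_wstar x)
  have hu'_le : ∀ x, u' x ≤ wstar x := fun x => (le_max_right _ _).trans (hlo_wstar x)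
  have hv_ge : ∀ y, V wstar y ≤ v y := by
    intro y; rw [← hVu2 y]; exact hVanti u wstar hu_le y
  have hv'_ge : ∀ y, V wstar y ≤ v' y := by
    intro y; rw [← hVu2' y]; exact hVanti u' wstar hu'_le y
  obtain ⟨h1, h2⟩ := mixed u v hu hv hu_le hv_ge
  obtain ⟨h1', h2'⟩ := mixed u' v' hu' hv' hu'_le hv'_ge
  exact ⟨h1.trans h1'.symm, h2.trans h2'.symm⟩
end

section
/- Suppose the maps M_{xy}, M_{x0}, M_{0y} satisfy conditions (i) Continuity, (ii) Monotonicity and (iii) Limits. Then for every fixed x ∈ X, every v ∈ ℝ^Y and every n_x > 0, there exists u ∈ ℝ such that M_{x0}(u) + Σ_{y∈Y} M_{xy}(u, v_y) = n_x; moreover if M_{x0} is strictly decreasing, this u is unique. -/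
open Filter Topology

/-- For fixed `x`, fixed `v : Y → ℝ` and `n x > 0`, the single equation
`M_{x0}(u) + ∑_y M_{xy}(u, v_y) = n_x` has a solution `u`, which is unique
when `M_{x0}` is strictly decreasing. -/
theorem bernstein_schrodinger_single_equation
    {X Y : Type*} [Fintype X] [Fintype Y]
    (n : X → ℝ) (m : Y → ℝ) (hn : ∀ x, 0 < n x) (hm : ∀ y, 0 < m y)
    (M : X → Y → ℝ → ℝ → ℝ) (Mx0 : X → ℝ → ℝ) (M0y : Y → ℝ → ℝ)
    -- (i) Continuity
    (hMcont : ∀ x y, Continuous fun p : ℝ × ℝ => M x y p.1 p.2)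
    (hMx0cont : ∀ x, Continuous (Mx0 x))
    (hM0ycont : ∀ y, Continuous (M0y y))
    -- (ii) Monotonicity
    (hMmono : ∀ x y (u u' v v' : ℝ), u ≤ u' → v ≤ v' → M x y u' v' ≤ M x y u v)
    (hMx0mono : ∀ x, Antitone (Mx0 x))
    (hM0ymono : ∀ y, Antitone (M0y y))
    -- (iii) Limits
    (hMtop1 : ∀ x y v, Tendsto (fun u => M x y u v) atTop (𝓝 0))
    (hMbot1 : ∀ x y v, Tendsto (fun u => M x y u v) atBot atTop)
    (hMtop2 : ∀ x y u, Tendsto (fun v => M x y u v) atTop (𝓝 0))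
    (hMbot2 : ∀ x y u, Tendsto (fun v => M x y u v) atBot atTop)
    (hMx0top : ∀ x, Tendsto (Mx0 x) atTop (𝓝 0))
    (hMx0bot : ∀ x, Tendsto (Mx0 x) atBot atTop)
    (hM0ytop : ∀ y, Tendsto (M0y y) atTop (𝓝 0))
    (hM0ybot : ∀ y, Tendsto (M0y y) atBot atTop)
    (x : X) (v : Y → ℝ) :
    (∃ u : ℝ, Mx0 x u + ∑ y, M x y u (v y) = n x) ∧
      (StrictAnti (Mx0 x) → ∃! u : ℝ, Mx0 x u + ∑ y, M x y u (v y) = n x) := by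

  set f : ℝ → ℝ := fun u => Mx0 x u + ∑ y, M x y u (v y) with hf
  have hcont : Continuous f := by
    apply (hMx0cont x).add
    exact continuous_finset_sum _ fun y _ =>
      (hMcont x y).comp (continuous_id.prodMk continuous_const)
  have htop : Tendsto f atTop (𝓝 0) := by
    have : Tendsto f atTop (𝓝 (0 + ∑ y : Y, (0:ℝ))) :=
      (hMx0top x).add (tendsto_finset_sum _ fun y _ => hMtop1 x y (v y))
    simpa using this
  have hbot : Tendsto f atBot atTop := by
    have hle : (fun u => Mx0 x u + ∑ y, M x y 0 (v y)) ≤ᶠ[atBot] f := by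
      filter_upwards [eventually_le_atBot (0:ℝ)] with u hu
      exact add_le_add_right (Finset.sum_le_sum fun y _ => hMmono x y u 0 (v y) (v y) hu le_rfl) _
    exact tendsto_atTop_mono' atBot hle (tendsto_atTop_add_const_right _ _ (hMx0bot x))
  -- find a point where f > n x and one where f < n x
  obtain ⟨b, hb⟩ := (htop.eventually (eventually_lt_nhds (hn x))).exists_forall_of_atTop
  obtain ⟨a, ha⟩ := (hbot.eventually (eventually_gt_atTop (n x))).exists_forall_of_atBot
  have hex : ∃ u, f u = n x := by
    have h1 : f (min a b) > n x := ha _ (min_le_left a b)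
    have h2 : f (max a b) < n x := hb _ (le_max_right a b)
    have : n x ∈ Set.Icc (f (max a b)) (f (min a b)) := ⟨h2.le, h1.le⟩
    have := intermediate_value_Icc' (min_le_max) hcont.continuousOn this
    obtain ⟨u, _, hu⟩ := this
    exact ⟨u, hu⟩
  refine ⟨hex, fun hs => ?_⟩
  obtain ⟨u, hu⟩ := hex
  refine ⟨u, hu, fun u' hu' => ?_⟩
  have hstrict : StrictAnti f := by
    intro s t hst
    have hsum : (∑ y, M x y t (v y)) ≤ ∑ y, M x y s (v y) :=
      Finset.sum_le_sum fun y _ => hMmono x y s t (v y) (v y) hst.le le_rfl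
    exact add_lt_add_of_lt_of_le (hs hst) hsum
  exact hstrict.injective (hu'.trans hu.symm)
end

section
/- Suppose the maps M_{xy}, M_{x0}, M_{0y} satisfy conditions (i) Continuity, (ii) Monotonicity and (iii) Limits, with M_{x0} and M_{0y} strictly decreasing. Define F : ℝ^Y → ℝ^X by letting F_x(v) be the unique u with M_{x0}(u) + Σ_{y∈Y} M_{xy}(u, v_y) = n_x, and G : ℝ^X → ℝ^Y by letting G_y(u) be the unique v with M_{0y}(v) + Σ_{x∈X} M_{xy}(u_x, v) = m_y. Then F and G are anti-isotone: v ≤ v' componentwise implies F_x(v') ≤ F_x(v) for all x, and u ≤ u' componentwise implies G_y(u') ≤ G_y(u) for all y; consequently the composition G ∘ F is isotone. -/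
open Filter Topology

/-- The coordinate update maps `F` and `G` of the iterative fitting procedure are
anti-isotone, and hence the composition `G ∘ F` is isotone. -/
theorem bernstein_schrodinger_updates_anti_isotone
    {X Y : Type*} [Fintype X] [Fintype Y]
    (n : X → ℝ) (m : Y → ℝ) (hn : ∀ x, 0 < n x) (hm : ∀ y, 0 < m y)
    (M : X → Y → ℝ → ℝ → ℝ) (Mx0 : X → ℝ → ℝ) (M0y : Y → ℝ → ℝ)
    -- (i) Continuity
    (hMcont : ∀ x y, Continuous fun p : ℝ × ℝ => M x y p.1 p.2)
    (hMx0cont : ∀ x, Continuous (Mx0 x))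
    (hM0ycont : ∀ y, Continuous (M0y y))
    -- (ii) Monotonicity
    (hMmono : ∀ x y (u u' v v' : ℝ), u ≤ u' → v ≤ v' → M x y u' v' ≤ M x y u v)
    (hMx0mono : ∀ x, Antitone (Mx0 x))
    (hM0ymono : ∀ y, Antitone (M0y y))
    -- (iii) Limits
    (hMtop1 : ∀ x y v, Tendsto (fun u => M x y u v) atTop (𝓝 0))
    (hMbot1 : ∀ x y v, Tendsto (fun u => M x y u v) atBot atTop)
    (hMtop2 : ∀ x y u, Tendsto (fun v => M x y u v) atTop (𝓝 0))
    (hMbot2 : ∀ x y u, Tendsto (fun v => M x y u v) atBot atTop)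
    (hMx0top : ∀ x, Tendsto (Mx0 x) atTop (𝓝 0))
    (hMx0bot : ∀ x, Tendsto (Mx0 x) atBot atTop)
    (hM0ytop : ∀ y, Tendsto (M0y y) atTop (𝓝 0))
    (hM0ybot : ∀ y, Tendsto (M0y y) atBot atTop)
    -- strict monotonicity of the singles terms
    (hMx0strict : ∀ x, StrictAnti (Mx0 x))
    (hM0ystrict : ∀ y, StrictAnti (M0y y))
    -- the update maps F and G, characterized by their defining equations
    (F : (Y → ℝ) → (X → ℝ)) (G : (X → ℝ) → (Y → ℝ))
    (hF : ∀ (v : Y → ℝ) (x : X), Mx0 x (F v x) + ∑ y, M x y (F v x) (v y) = n x)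
    (hG : ∀ (u : X → ℝ) (y : Y), M0y y (G u y) + ∑ x, M x y (u x) (G u y) = m y) :
    (∀ v v' : Y → ℝ, v ≤ v' → F v' ≤ F v) ∧
    (∀ u u' : X → ℝ, u ≤ u' → G u' ≤ G u) ∧
    Monotone (G ∘ F) := by
  have hFanti : ∀ v v' : Y → ℝ, v ≤ v' → F v' ≤ F v := by
    intro v v' hvv' x
    by_contra h
    push_neg at h
    have h1 : Mx0 x (F v' x) < Mx0 x (F v x) := hMx0strict x h
    have h2 : ∑ y, M x y (F v' x) (v' y) ≤ ∑ y, M x y (F v x) (v y) :=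
      Finset.sum_le_sum fun y _ => hMmono x y _ _ _ _ h.le (hvv' y)
    have e1 := hF v x
    have e2 := hF v' x
    linarith
  have hGanti : ∀ u u' : X → ℝ, u ≤ u' → G u' ≤ G u := by
    intro u u' huu' y
    by_contra h
    push_neg at h
    have h1 : M0y y (G u' y) < M0y y (G u y) := hM0ystrict y h
    have h2 : ∑ x, M x y (u' x) (G u' y) ≤ ∑ x, M x y (u x) (G u y) :=
      Finset.sum_le_sum fun x _ => hMmono x y _ _ _ _ (huu' x) h.le
    have e1 := hG u y
    have e2 := hG u' y
    linarith
  exact ⟨hFanti, hGanti, fun v v' hvv' => hGanti _ _ (hFanti v v' hvv')⟩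
end

section
/- Suppose the maps M_{xy}, M_{x0}, M_{0y} satisfy conditions (i) Continuity, (ii) Monotonicity and (iii) Limits, with M_{x0} and M_{0y} strictly decreasing. Define the iterates of the iterative fitting algorithm: u^1 ∈ ℝ^X is given by M_{x0}(u^1_x) = n_x; for t ≥ 1, v^{t} ∈ ℝ^Y is the unique solution of M_{0y}(v^{t}_y) + Σ_{x∈X} M_{xy}(u^{t}_x, v^{t}_y) = m_y for each y, and u^{t+1} ∈ ℝ^X is the unique solution of M_{x0}(u^{t+1}_x) + Σ_{y∈Y} M_{xy}(u^{t+1}_x, v^{t}_y) = n_x for each x. Then the sequence (v^t) is componentwise nonincreasing and bounded below, the sequence (u^t) is componentwise nondecreasing, both sequences converge, and their limits (ū, v̄) solve the nonlinear Bernstein–Schrödinger system. -/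
open Filter Topology

/-- Monotone convergence of the iterative fitting algorithm: the iterates `v^t` are
componentwise nonincreasing and bounded below, the iterates `u^t` are componentwise
nondecreasing, both converge, and their limits solve the nonlinear
Bernstein–Schrödinger system. -/
theorem bernstein_schrodinger_algorithm_converges
    {X Y : Type*} [Fintype X] [Fintype Y]
    (n : X → ℝ) (m : Y → ℝ) (hn : ∀ x, 0 < n x) (hm : ∀ y, 0 < m y)
    (M : X → Y → ℝ → ℝ → ℝ) (Mx0 : X → ℝ → ℝ) (M0y : Y → ℝ → ℝ)
    -- (i) Continuity
    (hMcont : ∀ x y, Continuous fun p : ℝ × ℝ => M x y p.1 p.2)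
    (hMx0cont : ∀ x, Continuous (Mx0 x))
    (hM0ycont : ∀ y, Continuous (M0y y))
    -- (ii) Monotonicity
    (hMmono : ∀ x y (u u' v v' : ℝ), u ≤ u' → v ≤ v' → M x y u' v' ≤ M x y u v)
    (hMx0mono : ∀ x, Antitone (Mx0 x))
    (hM0ymono : ∀ y, Antitone (M0y y))
    -- (iii) Limits
    (hMtop1 : ∀ x y v, Tendsto (fun u => M x y u v) atTop (𝓝 0))
    (hMbot1 : ∀ x y v, Tendsto (fun u => M x y u v) atBot atTop)
    (hMtop2 : ∀ x y u, Tendsto (fun v => M x y u v) atTop (𝓝 0))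
    (hMbot2 : ∀ x y u, Tendsto (fun v => M x y u v) atBot atTop)
    (hMx0top : ∀ x, Tendsto (Mx0 x) atTop (𝓝 0))
    (hMx0bot : ∀ x, Tendsto (Mx0 x) atBot atTop)
    (hM0ytop : ∀ y, Tendsto (M0y y) atTop (𝓝 0))
    (hM0ybot : ∀ y, Tendsto (M0y y) atBot atTop)
    -- strict monotonicity of the singles terms
    (hMx0strict : ∀ x, StrictAnti (Mx0 x))
    (hM0ystrict : ∀ y, StrictAnti (M0y y))
    -- the iterates of the algorithm (indexed from t = 1)
    (u : ℕ → X → ℝ) (v : ℕ → Y → ℝ)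
    (hinit : ∀ x, Mx0 x (u 1 x) = n x)
    (hv : ∀ t, 1 ≤ t → ∀ y, M0y y (v t y) + ∑ x, M x y (u t x) (v t y) = m y)
    (hu : ∀ t, 1 ≤ t → ∀ x, Mx0 x (u (t + 1) x) + ∑ y, M x y (u (t + 1) x) (v t y) = n x) :
    (∀ t, 1 ≤ t → ∀ y, v (t + 1) y ≤ v t y) ∧
    (∃ B : ℝ, ∀ t, 1 ≤ t → ∀ y, B ≤ v t y) ∧
    (∀ t, 1 ≤ t → ∀ x, u t x ≤ u (t + 1) x) ∧
    (∃ (ubar : X → ℝ) (vbar : Y → ℝ),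
      (∀ x, Tendsto (fun t => u t x) atTop (𝓝 (ubar x))) ∧
      (∀ y, Tendsto (fun t => v t y) atTop (𝓝 (vbar y))) ∧
      (∀ x, Mx0 x (ubar x) + ∑ y, M x y (ubar x) (vbar y) = n x) ∧
      (∀ y, M0y y (vbar y) + ∑ x, M x y (ubar x) (vbar y) = m y)) := by

  classical
  -- nonnegativity of all the maps
  have hMnonneg : ∀ x y a b, 0 ≤ M x y a b := by
    intro x y a b
    refine le_of_tendsto (hMtop1 x y b) ?_
    filter_upwards [eventually_ge_atTop a] with c hc
    exact hMmono x y a c b b hc le_rfl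
  have hsumY_nonneg : ∀ x (a : ℝ) (vv : Y → ℝ), 0 ≤ ∑ y, M x y a (vv y) := fun x a vv =>
    Finset.sum_nonneg fun y _ => hMnonneg x y a (vv y)
  have hsumX_nonneg : ∀ y (b : ℝ) (uu : X → ℝ), 0 ≤ ∑ x, M x y (uu x) b := fun y b uu =>
    Finset.sum_nonneg fun x _ => hMnonneg x y (uu x) b
  -- strict antitonicity of the aggregate maps
  have hF : ∀ x (vv : Y → ℝ), StrictAnti (fun w => Mx0 x w + ∑ y, M x y w (vv y)) := by
    intro x vv a b hab
    exact add_lt_add_of_lt_of_le (hMx0strict x hab)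
      (Finset.sum_le_sum fun y _ => hMmono x y a b (vv y) (vv y) hab.le le_rfl)
  have hG : ∀ y (uu : X → ℝ), StrictAnti (fun w => M0y y w + ∑ x, M x y (uu x) w) := by
    intro y uu a b hab
    exact add_lt_add_of_lt_of_le (hM0ystrict y hab)
      (Finset.sum_le_sum fun x _ => hMmono x y (uu x) (uu x) a b le_rfl hab.le)
  -- step u nondecreasing ⟹ v nonincreasing
  have hvstep : ∀ t, 1 ≤ t → (∀ x, u t x ≤ u (t + 1) x) → ∀ y, v (t + 1) y ≤ v t y := by
    intro t ht hmono y
    have h1 := hv t ht y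
    have h2 := hv (t + 1) (ht.trans (Nat.le_succ t)) y
    have hle : (fun w => M0y y w + ∑ x, M x y (u (t + 1) x) w) (v t y)
        ≤ (fun w => M0y y w + ∑ x, M x y (u (t + 1) x) w) (v (t + 1) y) := by
      simp only
      rw [h2, ← h1]
      exact add_le_add_right (Finset.sum_le_sum fun x _ =>
        hMmono x y (u t x) (u (t + 1) x) (v t y) (v t y) (hmono x) le_rfl) _
    exact ((hG y (fun x => u (t + 1) x)).le_iff_ge).1 hle
  -- step v nonincreasing ⟹ next u step nondecreasing
  have hustep : ∀ t, 1 ≤ t → (∀ y, v (t + 1) y ≤ v t y) → ∀ x, u (t + 1) x ≤ u (t + 2) x := by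
    intro t ht hmono x
    have h1 := hu t ht x
    have h2 := hu (t + 1) (ht.trans (Nat.le_succ t)) x
    have hle : (fun w => Mx0 x w + ∑ y, M x y w (v (t + 1) y)) (u (t + 2) x)
        ≤ (fun w => Mx0 x w + ∑ y, M x y w (v (t + 1) y)) (u (t + 1) x) := by
      simp only
      rw [show t + 1 + 1 = t + 2 from rfl] at h2
      rw [h2, ← h1]
      exact add_le_add_right (Finset.sum_le_sum fun y _ =>
        hMmono x y (u (t + 1) x) (u (t + 1) x) (v (t + 1) y) (v t y) le_rfl (hmono y)) _
    exact ((hF x (fun y => v (t + 1) y)).le_iff_ge).1 hle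
  -- u is componentwise nondecreasing
  have humono : ∀ t, 1 ≤ t → ∀ x, u t x ≤ u (t + 1) x := by
    intro t ht
    induction t, ht using Nat.le_induction with
    | base =>
      intro x
      have h1 := hu 1 le_rfl x
      have hle : Mx0 x (u 2 x) ≤ Mx0 x (u 1 x) := by
        rw [hinit x, ← h1]
        have := hsumY_nonneg x (u 2 x) (fun y => v 1 y)
        linarith
      exact ((hMx0strict x).le_iff_ge).1 hle
    | succ t ht ih =>
      exact hustep t ht (hvstep t ht ih)
  have hvmono : ∀ t, 1 ≤ t → ∀ y, v (t + 1) y ≤ v t y := fun t ht =>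
    hvstep t ht (humono t ht)
  -- lower bound for v
  have hvlb : ∀ y, ∃ b : ℝ, ∀ t, 1 ≤ t → b ≤ v t y := by
    intro y
    obtain ⟨b, hb⟩ := eventually_atBot.1 ((hM0ybot y).eventually_gt_atTop (m y))
    refine ⟨b, fun t ht => ?_⟩
    by_contra h
    push_neg at h
    have h1 : m y < M0y y (v t y) := hb _ h.le
    have h2 : M0y y (v t y) ≤ m y := by
      have heq := hv t ht y
      have := hsumX_nonneg y (v t y) (fun x => u t x)
      linarith
    linarith
  choose b hb using hvlb
  obtain ⟨B, hB⟩ : ∃ B : ℝ, ∀ y, B ≤ b y := by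
    rcases isEmpty_or_nonempty Y with h | h
    · exact ⟨0, fun y => (h.false y).elim⟩
    · exact ⟨Finset.univ.inf' Finset.univ_nonempty b,
        fun y => Finset.inf'_le _ (Finset.mem_univ y)⟩
  have hvB : ∀ t, 1 ≤ t → ∀ y, B ≤ v t y := fun t ht y => (hB y).trans (hb y t ht)
  -- upper bound for u
  have hub : ∀ x, ∃ c : ℝ, ∀ t, 1 ≤ t → u t x ≤ c := by
    intro x
    have hsumlim : Tendsto (fun w => ∑ y, M x y w B) atTop (𝓝 0) := by
      have h := tendsto_finset_sum (Finset.univ : Finset Y) (fun y _ => hMtop1 x y B)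
      simpa using h
    have hlim : Tendsto (fun w => Mx0 x w + ∑ y, M x y w B) atTop (𝓝 0) := by
      have := (hMx0top x).add hsumlim
      simpa using this
    obtain ⟨c, hc⟩ := eventually_atTop.1 (hlim.eventually_lt_const (hn x))
    have key : ∀ t, 1 ≤ t → u (t + 1) x ≤ c := by
      intro t ht
      by_contra h
      push_neg at h
      have h1 : Mx0 x (u (t + 1) x) + ∑ y, M x y (u (t + 1) x) B < n x := hc _ h.le
      have h2 : n x ≤ Mx0 x (u (t + 1) x) + ∑ y, M x y (u (t + 1) x) B := by
        rw [← hu t ht x]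
        exact add_le_add_right (Finset.sum_le_sum fun y _ =>
          hMmono x y (u (t + 1) x) (u (t + 1) x) B (v t y) le_rfl (hvB t ht y)) _
      linarith
    refine ⟨c, fun t ht => ?_⟩
    exact (humono t ht x).trans (key t ht)
  -- convergence of u
  have hucvg : ∀ x, ∃ L : ℝ, Tendsto (fun t => u t x) atTop (𝓝 L) := by
    intro x
    obtain ⟨c, hc⟩ := hub x
    have hmono : Monotone (fun t : ℕ => u (t + 1) x) :=
      monotone_nat_of_le_succ fun t => humono (t + 1) (Nat.le_add_left 1 t) x
    have hbdd : BddAbove (Set.range fun t : ℕ => u (t + 1) x) := by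
      refine ⟨c, ?_⟩
      rintro r ⟨t, rfl⟩
      exact hc (t + 1) (Nat.le_add_left 1 t)
    have := tendsto_atTop_ciSup hmono hbdd
    exact ⟨_, (tendsto_add_atTop_iff_nat 1).1 this⟩
  choose ubar hulim using hucvg
  -- convergence of v
  have hvcvg : ∀ y, ∃ L : ℝ, Tendsto (fun t => v t y) atTop (𝓝 L) := by
    intro y
    have hmono : Antitone (fun t : ℕ => v (t + 1) y) :=
      antitone_nat_of_succ_le fun t => hvmono (t + 1) (Nat.le_add_left 1 t) y
    have hbdd : BddBelow (Set.range fun t : ℕ => v (t + 1) y) := by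
      refine ⟨B, ?_⟩
      rintro r ⟨t, rfl⟩
      exact hvB (t + 1) (Nat.le_add_left 1 t) y
    have := tendsto_atTop_ciInf hmono hbdd
    exact ⟨_, (tendsto_add_atTop_iff_nat 1).1 this⟩
  choose vbar hvlim using hvcvg
  have hulim' : ∀ x, Tendsto (fun t => u (t + 1) x) atTop (𝓝 (ubar x)) :=
    fun x => (tendsto_add_atTop_iff_nat 1).2 (hulim x)
  -- limits of the coupling terms
  have hterm : ∀ x y, Tendsto (fun t => M x y (u t x) (v t y)) atTop
      (𝓝 (M x y (ubar x) (vbar y))) := fun x y =>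
    ((hMcont x y).tendsto (ubar x, vbar y)).comp ((hulim x).prodMk_nhds (hvlim y))
  have hterm' : ∀ x y, Tendsto (fun t => M x y (u (t + 1) x) (v t y)) atTop
      (𝓝 (M x y (ubar x) (vbar y))) := fun x y =>
    ((hMcont x y).tendsto (ubar x, vbar y)).comp ((hulim' x).prodMk_nhds (hvlim y))
  -- the limit solves the m-equations
  have heqm : ∀ y, M0y y (vbar y) + ∑ x, M x y (ubar x) (vbar y) = m y := by
    intro y
    have h1 : Tendsto (fun t => M0y y (v t y) + ∑ x, M x y (u t x) (v t y)) atTop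
        (𝓝 (M0y y (vbar y) + ∑ x, M x y (ubar x) (vbar y))) :=
      (((hM0ycont y).tendsto _).comp (hvlim y)).add
        (tendsto_finset_sum _ fun x _ => hterm x y)
    have h2 : Tendsto (fun t => M0y y (v t y) + ∑ x, M x y (u t x) (v t y)) atTop
        (𝓝 (m y)) := by
      refine Tendsto.congr' ?_ tendsto_const_nhds
      filter_upwards [eventually_ge_atTop 1] with t ht
      exact (hv t ht y).symm
    exact tendsto_nhds_unique h1 h2
  -- the limit solves the n-equations
  have heqn : ∀ x, Mx0 x (ubar x) + ∑ y, M x y (ubar x) (vbar y) = n x := by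
    intro x
    have h1 : Tendsto (fun t => Mx0 x (u (t + 1) x) + ∑ y, M x y (u (t + 1) x) (v t y)) atTop
        (𝓝 (Mx0 x (ubar x) + ∑ y, M x y (ubar x) (vbar y))) :=
      (((hMx0cont x).tendsto _).comp (hulim' x)).add
        (tendsto_finset_sum _ fun y _ => hterm' x y)
    have h2 : Tendsto (fun t => Mx0 x (u (t + 1) x) + ∑ y, M x y (u (t + 1) x) (v t y)) atTop
        (𝓝 (n x)) := by
      refine Tendsto.congr' ?_ tendsto_const_nhds
      filter_upwards [eventually_ge_atTop 1] with t ht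
      exact (hu t ht x).symm
    exact tendsto_nhds_unique h1 h2
  exact ⟨hvmono, ⟨B, hvB⟩, humono, ubar, vbar, hulim, hvlim, heqn, heqm⟩
end

section
/- Suppose each Ψ_{ij} satisfies conditions (a), (b), (c) and (d). Then for all sufficiently small T > 0 there exist u ∈ ℝ^I and v ∈ ℝ^J with u_i ≥ 0 and v_j ≥ 0 for all i, j, such that exp(−u_i/T) + Σ_{j∈J} exp(−Ψ_{ij}(u_i, v_j)/T) = 1 for every i ∈ I, and exp(−v_j/T) + Σ_{i∈I} exp(−Ψ_{ij}(u_i, v_j)/T) = 1 for every j ∈ J. -/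
open Filter Topology

private lemma exists_root_aux (f : ℝ → ℝ) (hc : Continuous f) (hanti : StrictAnti f)
    (M : ℝ) (h0 : 1 ≤ f 0) (hM : f M < 1) : ∃ x, 0 ≤ x ∧ x ≤ M ∧ f x = 1 := by
  have h0M : (0:ℝ) ≤ M := by
    by_contra h
    push_neg at h
    have := hanti h
    linarith
  obtain ⟨x, hx, hfx⟩ := intermediate_value_Icc' h0M hc.continuousOn ⟨hM.le, h0⟩
  exact ⟨x, hx.1, hx.2, hfx⟩

private lemma strictAnti_aux {T : ℝ} (hT : 0 < T) {K : Type*} [Fintype K]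
    (g : K → ℝ → ℝ) (hg : ∀ k (a b : ℝ), a ≤ b → g k a ≤ g k b) :
    StrictAnti (fun x => Real.exp (-x/T) + ∑ k, Real.exp (-(g k x)/T)) := by
  intro a b hab
  have h1 : Real.exp (-b/T) < Real.exp (-a/T) := by
    apply Real.exp_lt_exp.2
    apply div_lt_div_of_pos_right ?_ hT
    linarith
  have h2 : ∑ k, Real.exp (-(g k b)/T) ≤ ∑ k, Real.exp (-(g k a)/T) := by
    apply Finset.sum_le_sum
    intro k _
    apply Real.exp_le_exp.2
    apply div_le_div_of_nonneg_right ?_ hT.le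
    linarith [hg k a b hab.le]
  simpa using add_lt_add_of_lt_of_le h1 h2

/-- For all sufficiently small temperatures `T > 0`, the regularized (Gibbs)
Bernstein–Schrödinger system associated with `Ψ` has a solution with nonnegative
payoffs. -/
theorem regularized_system_solution_small_temperature
    {I J : Type*} [Fintype I] [Fintype J]
    (Ψ : I → J → ℝ → ℝ → ℝ)
    -- (a) continuity
    (ha : ∀ i j, Continuous fun p : ℝ × ℝ => Ψ i j p.1 p.2)
    -- (b) monotonicity, strict for jointly strict increases
    (hb : ∀ i j (t t' r r' : ℝ), t ≤ t' → r ≤ r' → Ψ i j t r ≤ Ψ i j t' r')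
    (hb' : ∀ i j (t t' r r' : ℝ), t < t' → r < r' → Ψ i j t r < Ψ i j t' r')
    -- (c) liminf Ψ(tₙ, rₙ) > 0 when one coordinate is bounded and the other tends to +∞
    (hc₁ : ∀ i j (t r : ℕ → ℝ), (∃ C : ℝ, ∀ k, |r k| ≤ C) → Tendsto t atTop atTop →
      ∃ ε > 0, ∀ᶠ k in atTop, ε ≤ Ψ i j (t k) (r k))
    (hc₂ : ∀ i j (t r : ℕ → ℝ), (∃ C : ℝ, ∀ k, |t k| ≤ C) → Tendsto r atTop atTop →
      ∃ ε > 0, ∀ᶠ k in atTop, ε ≤ Ψ i j (t k) (r k))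
    -- (d) limsup Ψ(tₙ, rₙ) < 0 when (tₙ - rₙ) is bounded and tₙ → -∞
    (hd : ∀ i j (t r : ℕ → ℝ), (∃ C : ℝ, ∀ k, |t k - r k| ≤ C) → Tendsto t atTop atBot →
      ∃ ε > 0, ∀ᶠ k in atTop, Ψ i j (t k) (r k) ≤ -ε) :
    ∃ T₀ > (0 : ℝ), ∀ T : ℝ, 0 < T → T < T₀ →
      ∃ (u : I → ℝ) (v : J → ℝ),
        (∀ i, 0 ≤ u i) ∧ (∀ j, 0 ≤ v j) ∧
        (∀ i, Real.exp (-(u i) / T) + ∑ j, Real.exp (-(Ψ i j (u i) (v j)) / T) = 1) ∧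
        (∀ j, Real.exp (-(v j) / T) + ∑ i, Real.exp (-(Ψ i j (u i) (v j)) / T) = 1) := by
  classical
  -- uniform positivity thresholds from (c)
  have h1 : ∀ i j, ∃ e c : ℝ, 0 < e ∧ ∀ t r : ℝ, c ≤ t → 0 ≤ r → e ≤ Ψ i j t r := by
    intro i j
    obtain ⟨e, he, hev⟩ := hc₁ i j (fun k => (k : ℝ)) (fun _ => 0) ⟨0, fun k => by simp⟩
      tendsto_natCast_atTop_atTop
    obtain ⟨K, hK⟩ := eventually_atTop.mp hev
    exact ⟨e, (K : ℝ), he, fun t r ht hr =>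
      le_trans (hK K le_rfl) (hb i j (K : ℝ) t 0 r ht hr)⟩
  have h2 : ∀ i j, ∃ e c : ℝ, 0 < e ∧ ∀ t r : ℝ, 0 ≤ t → c ≤ r → e ≤ Ψ i j t r := by
    intro i j
    obtain ⟨e, he, hev⟩ := hc₂ i j (fun _ => 0) (fun k => (k : ℝ)) ⟨0, fun k => by simp⟩
      tendsto_natCast_atTop_atTop
    obtain ⟨K, hK⟩ := eventually_atTop.mp hev
    exact ⟨e, (K : ℝ), he, fun t r ht hr =>
      le_trans (hK K le_rfl) (hb i j 0 t (K : ℝ) r ht hr)⟩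
  choose e1 c1 he1 hΨ1 using h1
  choose e2 c2 he2 hΨ2 using h2
  -- global ε and threshold C
  set E : Finset ℝ := insert 1 ((Finset.univ : Finset (I × J)).image
    fun p => min (e1 p.1 p.2) (e2 p.1 p.2)) with hE
  have hEne : E.Nonempty := Finset.insert_nonempty _ _
  set ε := E.min' hEne with hεdef
  have hεpos : 0 < ε := by
    rw [hεdef, Finset.lt_min'_iff]
    intro b hbE
    rcases Finset.mem_insert.mp hbE with h | h
    · rw [h]; norm_num
    · obtain ⟨p, -, rfl⟩ := Finset.mem_image.mp h
      exact lt_min (he1 p.1 p.2) (he2 p.1 p.2)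
  have hεe1 : ∀ i j, ε ≤ e1 i j := fun i j =>
    le_trans (E.min'_le _ (Finset.mem_insert_of_mem
      (Finset.mem_image_of_mem _ (Finset.mem_univ (i, j))))) (min_le_left _ _)
  have hεe2 : ∀ i j, ε ≤ e2 i j := fun i j =>
    le_trans (E.min'_le _ (Finset.mem_insert_of_mem
      (Finset.mem_image_of_mem _ (Finset.mem_univ (i, j))))) (min_le_right _ _)
  set n : ℕ := max (Fintype.card I) (Fintype.card J) with hn
  have hlogn : 0 ≤ Real.log n := by
    rcases Nat.eq_zero_or_pos n with h | h
    · simp [h]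
    · exact Real.log_nonneg (by exact_mod_cast h)
  refine ⟨ε / (Real.log n + 1), div_pos hεpos (by linarith), ?_⟩
  intro T hT hTT₀
  have hεT : Real.log n + 1 < ε / T := by
    have h1 : T * (Real.log n + 1) < ε := (lt_div_iff₀ (by linarith)).mp hTT₀
    rw [lt_div_iff₀ hT]
    nlinarith
  have hsmall : ∀ m : ℕ, m ≤ n → (m : ℝ) * Real.exp (-(ε / T)) < 1 := by
    intro m hm
    have hle : (m : ℝ) ≤ Real.exp (Real.log n) := by
      refine le_trans (Nat.cast_le.2 hm) ?_
      rcases Nat.eq_zero_or_pos n with h | h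
      · rw [h]; push_cast; positivity
      · rw [Real.exp_log (by exact_mod_cast h)]
    calc (m : ℝ) * Real.exp (-(ε / T))
        ≤ Real.exp (Real.log n) * Real.exp (-(ε / T)) := by gcongr
      _ = Real.exp (Real.log n - ε / T) := by rw [← Real.exp_add]; ring_nf
      _ < Real.exp 0 := Real.exp_lt_exp.2 (by linarith)
      _ = 1 := Real.exp_zero
  set δ : ℝ := 1 - (n : ℝ) * Real.exp (-(ε / T)) with hδdef
  have hδ : 0 < δ := by
    rw [hδdef]
    linarith [hsmall n le_rfl]
  -- thresholds C and bound M
  set Cs : Finset ℝ := insert 0 ((Finset.univ : Finset (I × J)).image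
    fun p => max (c1 p.1 p.2) (c2 p.1 p.2)) with hCs
  have hCsne : Cs.Nonempty := Finset.insert_nonempty _ _
  set C := Cs.max' hCsne with hCdef
  have hC0 : (0:ℝ) ≤ C := Cs.le_max' _ (Finset.mem_insert_self _ _)
  have hCc1 : ∀ i j, c1 i j ≤ C := fun i j =>
    le_trans (le_max_left _ _) (Cs.le_max' _ (Finset.mem_insert_of_mem
      (Finset.mem_image_of_mem _ (Finset.mem_univ (i, j)))))
  have hCc2 : ∀ i j, c2 i j ≤ C := fun i j =>
    le_trans (le_max_right _ _) (Cs.le_max' _ (Finset.mem_insert_of_mem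
      (Finset.mem_image_of_mem _ (Finset.mem_univ (i, j)))))
  set M : ℝ := max C (T * (-Real.log δ) + 1) with hMdef
  have hMC : C ≤ M := le_max_left _ _
  have hM0 : (0:ℝ) ≤ M := le_trans hC0 hMC
  have hMexp : Real.exp (-M / T) < δ := by
    have h1 : T * (-Real.log δ) < M := lt_of_lt_of_le (by linarith) (le_max_right _ _)
    have h2 : -M / T < Real.log δ := by
      rw [div_lt_iff₀ hT]
      nlinarith
    calc Real.exp (-M / T) < Real.exp (Real.log δ) := Real.exp_lt_exp.2 h2
      _ = δ := Real.exp_log hδ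
  have cexp : Continuous fun x : ℝ => Real.exp (-x / T) :=
    Real.continuous_exp.comp (continuous_neg.div_const T)
  have hcardJ : (Fintype.card J : ℝ) ≤ (n : ℝ) :=
    Nat.cast_le.2 (le_max_right (Fintype.card I) (Fintype.card J))
  have hcardI : (Fintype.card I : ℝ) ≤ (n : ℝ) :=
    Nat.cast_le.2 (le_max_left (Fintype.card I) (Fintype.card J))
  -- scalar solvability for the u-equations
  have hexU : ∀ v : J → ℝ, (∀ j, 0 ≤ v j) → ∀ i, ∃ x, 0 ≤ x ∧ x ≤ M ∧
      Real.exp (-x / T) + ∑ j, Real.exp (-(Ψ i j x (v j)) / T) = 1 := by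
    intro v hv i
    apply exists_root_aux
    · exact cexp.add (continuous_finset_sum _ fun j _ =>
        cexp.comp ((ha i j).comp (continuous_id.prodMk continuous_const)))
    · exact strictAnti_aux hT (fun j x => Ψ i j x (v j))
        (fun j a b hab => hb i j a b (v j) (v j) hab le_rfl)
    · have h0 : 0 ≤ ∑ j, Real.exp (-(Ψ i j 0 (v j)) / T) :=
        Finset.sum_nonneg fun j _ => (Real.exp_pos _).le
      simp only [neg_zero, zero_div, Real.exp_zero]
      linarith
    · have hterm : ∀ j : J, Real.exp (-(Ψ i j M (v j)) / T) ≤ Real.exp (-(ε / T)) := by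
        intro j
        apply Real.exp_le_exp.2
        have hΨ : ε ≤ Ψ i j M (v j) :=
          le_trans (hεe1 i j) (hΨ1 i j M (v j) (le_trans (hCc1 i j) hMC) (hv j))
        rw [← neg_div]
        gcongr
      have hsum : ∑ j, Real.exp (-(Ψ i j M (v j)) / T)
          ≤ (Fintype.card J : ℝ) * Real.exp (-(ε / T)) := by
        calc ∑ j, Real.exp (-(Ψ i j M (v j)) / T)
            ≤ ∑ _j : J, Real.exp (-(ε / T)) := Finset.sum_le_sum fun j _ => hterm j
          _ = (Fintype.card J : ℝ) * Real.exp (-(ε / T)) := by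
              rw [Finset.sum_const, Finset.card_univ, nsmul_eq_mul]
      have hJε : (Fintype.card J : ℝ) * Real.exp (-(ε / T))
          ≤ (n : ℝ) * Real.exp (-(ε / T)) := by gcongr
      linarith
  -- scalar solvability for the v-equations
  have hexV : ∀ u : I → ℝ, (∀ i, 0 ≤ u i) → ∀ j, ∃ x, 0 ≤ x ∧ x ≤ M ∧
      Real.exp (-x / T) + ∑ i, Real.exp (-(Ψ i j (u i) x) / T) = 1 := by
    intro u hu j
    apply exists_root_aux
    · exact cexp.add (continuous_finset_sum _ fun i _ =>
        cexp.comp ((ha i j).comp (continuous_const.prodMk continuous_id)))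
    · exact strictAnti_aux hT (fun i x => Ψ i j (u i) x)
        (fun i a b hab => hb i j (u i) (u i) a b le_rfl hab)
    · have h0 : 0 ≤ ∑ i, Real.exp (-(Ψ i j (u i) 0) / T) :=
        Finset.sum_nonneg fun i _ => (Real.exp_pos _).le
      simp only [neg_zero, zero_div, Real.exp_zero]
      linarith
    · have hterm : ∀ i : I, Real.exp (-(Ψ i j (u i) M) / T) ≤ Real.exp (-(ε / T)) := by
        intro i
        apply Real.exp_le_exp.2
        have hΨ : ε ≤ Ψ i j (u i) M :=
          le_trans (hεe2 i j) (hΨ2 i j (u i) M (hu i) (le_trans (hCc2 i j) hMC))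
        rw [← neg_div]
        gcongr
      have hsum : ∑ i, Real.exp (-(Ψ i j (u i) M) / T)
          ≤ (Fintype.card I : ℝ) * Real.exp (-(ε / T)) := by
        calc ∑ i, Real.exp (-(Ψ i j (u i) M) / T)
            ≤ ∑ _i : I, Real.exp (-(ε / T)) := Finset.sum_le_sum fun i _ => hterm i
          _ = (Fintype.card I : ℝ) * Real.exp (-(ε / T)) := by
              rw [Finset.sum_const, Finset.card_univ, nsmul_eq_mul]
      have hIε : (Fintype.card I : ℝ) * Real.exp (-(ε / T))
          ≤ (n : ℝ) * Real.exp (-(ε / T)) := by gcongr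
      linarith
  choose! U hU0 hUM hUeq using hexU
  choose! V hV0 hVM hVeq using hexV
  -- antitonicity of the solve maps
  have hUanti : ∀ v v' : J → ℝ, (∀ j, 0 ≤ v j) → (∀ j, 0 ≤ v' j) →
      (∀ j, v j ≤ v' j) → ∀ i, U v' i ≤ U v i := by
    intro v v' hv hv' hle i
    have hanti : StrictAnti (fun x => Real.exp (-x / T) +
        ∑ j, Real.exp (-(Ψ i j x (v' j)) / T)) :=
      strictAnti_aux hT (fun j x => Ψ i j x (v' j))
        (fun j a b hab => hb i j a b (v' j) (v' j) hab le_rfl)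
    have h2 : Real.exp (-(U v i) / T) + ∑ j, Real.exp (-(Ψ i j (U v i) (v' j)) / T)
        ≤ Real.exp (-(U v' i) / T) + ∑ j, Real.exp (-(Ψ i j (U v' i) (v' j)) / T) := by
      rw [hUeq v' hv' i, ← hUeq v hv i]
      have : ∀ j : J, Real.exp (-(Ψ i j (U v i) (v' j)) / T)
          ≤ Real.exp (-(Ψ i j (U v i) (v j)) / T) := by
        intro j
        apply Real.exp_le_exp.2
        apply div_le_div_of_nonneg_right ?_ hT.le
        have := hb i j (U v i) (U v i) (v j) (v' j) le_rfl (hle j)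
        linarith
      exact add_le_add_right (Finset.sum_le_sum fun j _ => this j) _
    exact hanti.le_iff_ge.mp h2
  have hVanti : ∀ u u' : I → ℝ, (∀ i, 0 ≤ u i) → (∀ i, 0 ≤ u' i) →
      (∀ i, u i ≤ u' i) → ∀ j, V u' j ≤ V u j := by
    intro u u' hu hu' hle j
    have hanti : StrictAnti (fun x => Real.exp (-x / T) +
        ∑ i, Real.exp (-(Ψ i j (u' i) x) / T)) :=
      strictAnti_aux hT (fun i x => Ψ i j (u' i) x)
        (fun i a b hab => hb i j (u' i) (u' i) a b le_rfl hab)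
    have h2 : Real.exp (-(V u j) / T) + ∑ i, Real.exp (-(Ψ i j (u' i) (V u j)) / T)
        ≤ Real.exp (-(V u' j) / T) + ∑ i, Real.exp (-(Ψ i j (u' i) (V u' j)) / T) := by
      rw [hVeq u' hu' j, ← hVeq u hu j]
      have : ∀ i : I, Real.exp (-(Ψ i j (u' i) (V u j)) / T)
          ≤ Real.exp (-(Ψ i j (u i) (V u j)) / T) := by
        intro i
        apply Real.exp_le_exp.2
        apply div_le_div_of_nonneg_right ?_ hT.le
        have := hb i j (u i) (u' i) (V u j) (V u j) (hle i) le_rfl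
        linarith
      exact add_le_add_right (Finset.sum_le_sum fun i _ => this i) _
    exact hanti.le_iff_ge.mp h2
  -- the iteration
  set w : ℕ → J → ℝ :=
    fun n => Nat.rec (motive := fun _ => J → ℝ) (fun _ => 0) (fun _ p => V (U p)) n with hw
  have hwsucc : ∀ m, w (m + 1) = V (U (w m)) := fun m => rfl
  have hwbound : ∀ m, (∀ j, 0 ≤ w m j) ∧ (∀ j, w m j ≤ M) := by
    intro m
    induction m with
    | zero => exact ⟨fun j => le_rfl, fun j => hM0⟩
    | succ m ih =>
      have hu0 : ∀ i, 0 ≤ U (w m) i := hU0 _ ih.1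
      exact ⟨fun j => hV0 _ hu0 j, fun j => hVM _ hu0 j⟩
  have hwstep : ∀ m j, w m j ≤ w (m + 1) j := by
    intro m
    induction m with
    | zero => exact fun j => (hwbound 1).1 j
    | succ m ih =>
      intro j
      have hUle : ∀ i, U (w (m + 1)) i ≤ U (w m) i :=
        hUanti _ _ (hwbound m).1 (hwbound (m + 1)).1 ih
      exact hVanti (U (w (m + 1))) (U (w m))
        (hU0 _ (hwbound (m + 1)).1) (hU0 _ (hwbound m).1) hUle j
  have hwmono : ∀ j, Monotone fun m => w m j := fun j =>
    monotone_nat_of_le_succ fun m => hwstep m j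
  have humono : ∀ i, Antitone fun m => U (w m) i := fun i =>
    antitone_nat_of_succ_le fun m =>
      hUanti _ _ (hwbound m).1 (hwbound (m + 1)).1 (hwstep m) i
  -- limits
  refine ⟨fun i => ⨅ m, U (w m) i, fun j => ⨆ m, w m j, ?_, ?_, ?_, ?_⟩
  · exact fun i => le_ciInf fun m => hU0 _ (hwbound m).1 i
  · intro j
    exact le_ciSup ⟨M, by rintro x ⟨m, rfl⟩; exact (hwbound m).2 j⟩ 0
  · -- u-equations in the limit
    intro i
    have hulim : ∀ i : I, Tendsto (fun m => U (w m) i) atTop (𝓝 (⨅ m, U (w m) i)) :=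
      fun i => tendsto_atTop_ciInf (humono i)
        ⟨0, by rintro x ⟨m, rfl⟩; exact hU0 _ (hwbound m).1 i⟩
    have hvlim : ∀ j : J, Tendsto (fun m => w m j) atTop (𝓝 (⨆ m, w m j)) :=
      fun j => tendsto_atTop_ciSup (hwmono j)
        ⟨M, by rintro x ⟨m, rfl⟩; exact (hwbound m).2 j⟩
    have hlim : Tendsto (fun m => Real.exp (-(U (w m) i) / T) +
        ∑ j, Real.exp (-(Ψ i j (U (w m) i) (w m j)) / T)) atTop
        (𝓝 (Real.exp (-(⨅ m, U (w m) i) / T) +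
          ∑ j, Real.exp (-(Ψ i j (⨅ m, U (w m) i) (⨆ m, w m j)) / T))) := by
      apply Tendsto.add
      · exact (cexp.tendsto _).comp (hulim i)
      · apply tendsto_finset_sum
        intro j _
        exact (cexp.tendsto _).comp (((ha i j).tendsto _).comp
          ((hulim i).prodMk_nhds (hvlim j)))
    have hconst : (fun m => Real.exp (-(U (w m) i) / T) +
        ∑ j, Real.exp (-(Ψ i j (U (w m) i) (w m j)) / T)) = fun _ => (1 : ℝ) :=
      funext fun m => hUeq (w m) (hwbound m).1 i
    rw [hconst] at hlim
    exact tendsto_nhds_unique hlim tendsto_const_nhds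
  · -- v-equations in the limit
    intro j
    have hulim : ∀ i : I, Tendsto (fun m => U (w m) i) atTop (𝓝 (⨅ m, U (w m) i)) :=
      fun i => tendsto_atTop_ciInf (humono i)
        ⟨0, by rintro x ⟨m, rfl⟩; exact hU0 _ (hwbound m).1 i⟩
    have hvlim : ∀ j : J, Tendsto (fun m => w m j) atTop (𝓝 (⨆ m, w m j)) :=
      fun j => tendsto_atTop_ciSup (hwmono j)
        ⟨M, by rintro x ⟨m, rfl⟩; exact (hwbound m).2 j⟩
    have hvlim' : Tendsto (fun m => w (m + 1) j) atTop (𝓝 (⨆ m, w m j)) :=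
      (hvlim j).comp (tendsto_add_atTop_nat 1)
    have hlim : Tendsto (fun m => Real.exp (-(w (m + 1) j) / T) +
        ∑ i, Real.exp (-(Ψ i j (U (w m) i) (w (m + 1) j)) / T)) atTop
        (𝓝 (Real.exp (-(⨆ m, w m j) / T) +
          ∑ i, Real.exp (-(Ψ i j (⨅ m, U (w m) i) (⨆ m, w m j)) / T))) := by
      apply Tendsto.add
      · exact (cexp.tendsto _).comp hvlim'
      · apply tendsto_finset_sum
        intro i _
        exact (cexp.tendsto _).comp (((ha i j).tendsto _).comp
          ((hulim i).prodMk_nhds hvlim'))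
    have hconst : (fun m => Real.exp (-(w (m + 1) j) / T) +
        ∑ i, Real.exp (-(Ψ i j (U (w m) i) (w (m + 1) j)) / T)) = fun _ => (1 : ℝ) :=
      funext fun m => hVeq (U (w m)) (hU0 _ (hwbound m).1) j
    rw [hconst] at hlim
    exact tendsto_nhds_unique hlim tendsto_const_nhds
end

section
/- Let Ψ : ℝ × ℝ → ℝ be continuous, nondecreasing in each argument and jointly strictly increasing, with Ψ(t,t) → +∞ as t → +∞ and Ψ(t,t) → −∞ as t → −∞, and let T > 0. Define M(u,v) as the unique m > 0 with Ψ(T·log m + u, T·log m + v) = 0. Then M is continuous, nonincreasing in each of its arguments, and satisfies the scaling identity M(u + c, v + c) = exp(−c/T)·M(u, v) for all u, v, c ∈ ℝ. -/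
open Filter Topology

/-- The implicit matching function `M` associated with a transfer function `Ψ` is
continuous, nonincreasing in each argument, and satisfies the scaling identity
`M(u + c, v + c) = exp(-c/T) · M(u, v)`. -/
theorem matching_function_properties
    (Ψ : ℝ → ℝ → ℝ)
    (hcont : Continuous fun p : ℝ × ℝ => Ψ p.1 p.2)
    (hmono₁ : ∀ r, Monotone fun t => Ψ t r)
    (hmono₂ : ∀ t, Monotone fun r => Ψ t r)
    (hstrict : ∀ t t' r r' : ℝ, t < t' → r < r' → Ψ t r < Ψ t' r')
    (htop : Tendsto (fun t => Ψ t t) atTop atTop)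
    (hbot : Tendsto (fun t => Ψ t t) atBot atBot)
    (T : ℝ) (hT : 0 < T)
    (M : ℝ → ℝ → ℝ)
    (hM : ∀ u v, 0 < M u v ∧ Ψ (T * Real.log (M u v) + u) (T * Real.log (M u v) + v) = 0)
    (hMuniq : ∀ u v m : ℝ, 0 < m → Ψ (T * Real.log m + u) (T * Real.log m + v) = 0 →
      m = M u v) :
    Continuous (fun p : ℝ × ℝ => M p.1 p.2) ∧
    (∀ v, Antitone fun u => M u v) ∧
    (∀ u, Antitone fun v => M u v) ∧
    (∀ u v c : ℝ, M (u + c) (v + c) = Real.exp (-c / T) * M u v) := by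
  -- monotonicity of the diagonal shift
  have mono : ∀ (u v s s' : ℝ), s ≤ s' → Ψ (s + u) (s + v) ≤ Ψ (s' + u) (s' + v) := by
    intro u v s s' h
    exact le_trans (hmono₁ (s + v) (by linarith)) (hmono₂ (s' + u) (by linarith))
  set f : ℝ × ℝ → ℝ := fun p => T * Real.log (M p.1 p.2) with hf
  have hfcont : Continuous f := by
    rw [continuous_iff_continuousAt]
    intro p
    rw [ContinuousAt]
    apply tendsto_order.2
    constructor
    · intro a ha
      have h1 : Ψ (a + p.1) (a + p.2) < 0 := by
        have := hstrict (a + p.1) (f p + p.1) (a + p.2) (f p + p.2)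
          (by linarith) (by linarith)
        have h0 := (hM p.1 p.2).2
        simp only [hf] at this ⊢
        linarith
      have hc : Continuous fun q : ℝ × ℝ => Ψ (a + q.1) (a + q.2) := by
        have : (fun q : ℝ × ℝ => Ψ (a + q.1) (a + q.2)) =
            (fun p : ℝ × ℝ => Ψ p.1 p.2) ∘ (fun q : ℝ × ℝ => (a + q.1, a + q.2)) := rfl
        rw [this]
        exact hcont.comp (by fun_prop)
      have hev : ∀ᶠ q in 𝓝 p, Ψ (a + q.1) (a + q.2) < 0 :=
        (hc.continuousAt (x := p)).eventually_lt continuousAt_const h1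
      filter_upwards [hev] with q hq
      by_contra hle
      push_neg at hle
      have := mono q.1 q.2 (f q) a hle
      have h0 := (hM q.1 q.2).2
      simp only [hf] at this
      linarith
    · intro a ha
      have h1 : 0 < Ψ (a + p.1) (a + p.2) := by
        have := hstrict (f p + p.1) (a + p.1) (f p + p.2) (a + p.2)
          (by linarith) (by linarith)
        have h0 := (hM p.1 p.2).2
        simp only [hf] at this ⊢
        linarith
      have hc : Continuous fun q : ℝ × ℝ => Ψ (a + q.1) (a + q.2) := by
        have : (fun q : ℝ × ℝ => Ψ (a + q.1) (a + q.2)) =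
            (fun p : ℝ × ℝ => Ψ p.1 p.2) ∘ (fun q : ℝ × ℝ => (a + q.1, a + q.2)) := rfl
        rw [this]
        exact hcont.comp (by fun_prop)
      have hev : ∀ᶠ q in 𝓝 p, 0 < Ψ (a + q.1) (a + q.2) :=
        (continuousAt_const (x := p)).eventually_lt (hc.continuousAt (x := p)) h1
      filter_upwards [hev] with q hq
      by_contra hle
      push_neg at hle
      have := mono q.1 q.2 a (f q) hle
      have h0 := (hM q.1 q.2).2
      simp only [hf] at this
      linarith
  refine ⟨?_, ?_, ?_, ?_⟩
  · have : (fun p : ℝ × ℝ => M p.1 p.2) = fun p => Real.exp (f p / T) := by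
      funext p
      rw [hf]
      rw [mul_div_cancel_left₀ _ (ne_of_gt hT), Real.exp_log (hM p.1 p.2).1]
    rw [this]
    exact Real.continuous_exp.comp (hfcont.div_const T)
  · intro v u u' huu'
    simp only
    by_contra hlt
    push_neg at hlt
    have hlog : Real.log (M u v) < Real.log (M u' v) :=
      Real.log_lt_log (hM u v).1 hlt
    have := hstrict (T * Real.log (M u v) + u) (T * Real.log (M u' v) + u')
      (T * Real.log (M u v) + v) (T * Real.log (M u' v) + v)
      (by nlinarith) (by nlinarith)
    have h0 := (hM u v).2
    have h0' := (hM u' v).2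
    linarith
  · intro u v v' hvv'
    simp only
    by_contra hlt
    push_neg at hlt
    have hlog : Real.log (M u v) < Real.log (M u v') :=
      Real.log_lt_log (hM u v).1 hlt
    have := hstrict (T * Real.log (M u v) + u) (T * Real.log (M u v') + u)
      (T * Real.log (M u v) + v) (T * Real.log (M u v') + v')
      (by nlinarith) (by nlinarith)
    have h0 := (hM u v).2
    have h0' := (hM u v').2
    linarith
  · intro u v c
    set m := Real.exp (-c / T) * M u v with hm
    have hmpos : 0 < m := mul_pos (Real.exp_pos _) (hM u v).1
    have hlogm : Real.log m = -c / T + Real.log (M u v) := by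
      rw [hm, Real.log_mul (Real.exp_ne_zero _) (ne_of_gt (hM u v).1), Real.log_exp]
    have hTlog : T * Real.log m = T * Real.log (M u v) - c := by
      rw [hlogm, mul_add, mul_div_cancel₀ _ (ne_of_gt hT)]
      ring
    have : Ψ (T * Real.log m + (u + c)) (T * Real.log m + (v + c)) = 0 := by
      rw [hTlog]
      have h0 := (hM u v).2
      convert h0 using 2 <;> ring
    exact (hMuniq (u + c) (v + c) m hmpos this).symm
end

section
/- Let X, Y be finite sets, n : X → ℝ and m : Y → ℝ with positive entries, T > 0, and for each x, y let Ψ_{xy} : ℝ × ℝ → ℝ be continuous and jointly strictly increasing, with unique implicit matching function M_{xy}(u,v) defined by Ψ_{xy}(T·log M_{xy}(u,v) + u, T·log M_{xy}(u,v) + v) = 0. Then the map (u, v) ↦ (μ_{xy}, μ_{x0}, μ_{0y}) given by μ_{xy} = M_{xy}(u_x, v_y), μ_{x0} = exp(−u_x/T), μ_{0y} = exp(−v_y/T) is a bijection between solutions (u, v) ∈ ℝ^X × ℝ^Y of the nonlinear Bernstein–Schrödinger system M_{x0}(u_x) + Σ_y M_{xy}(u_x, v_y) = n_x, M_{0y}(v_y)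 + Σ_x M_{xy}(u_x, v_y) = m_y (with M_{x0}(u) = exp(−u/T), M_{0y}(v) = exp(−v/T)) and solutions with positive entries (μ_{xy}, μ_{x0}, μ_{0y}) of the aggregate matching system: μ_{x0} + Σ_{y∈Y} μ_{xy} = n_x for all x, μ_{0y} + Σ_{x∈X} μ_{xy} = m_y for all y, and Ψ_{xy}(T·log(μ_{xy}/μ_{x0}), T·log(μ_{xy}/μ_{0y})) = 0 for all x, y. -/
open Filter Topology

/-- The map `(u, v) ↦ (μ_{xy}, μ_{x0}, μ_{0y})` is a bijection between the solutions of
the nonlinear Bernstein–Schrödinger system and the positive solutions of the aggregate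
matching system. -/
theorem bernstein_schrodinger_aggregate_bijection
    {X Y : Type*} [Fintype X] [Fintype Y]
    (n : X → ℝ) (m : Y → ℝ) (hn : ∀ x, 0 < n x) (hm : ∀ y, 0 < m y)
    (T : ℝ) (hT : 0 < T)
    (Ψ : X → Y → ℝ → ℝ → ℝ)
    (hcont : ∀ x y, Continuous fun p : ℝ × ℝ => Ψ x y p.1 p.2)
    (hstrict : ∀ x y (t t' r r' : ℝ), t < t' → r < r' → Ψ x y t r < Ψ x y t' r')
    -- the implicit matching functions
    (M : X → Y → ℝ → ℝ → ℝ)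
    (hM : ∀ x y (u v : ℝ), 0 < M x y u v ∧
      Ψ x y (T * Real.log (M x y u v) + u) (T * Real.log (M x y u v) + v) = 0)
    (hMuniq : ∀ x y (u v μ : ℝ), 0 < μ →
      Ψ x y (T * Real.log μ + u) (T * Real.log μ + v) = 0 → μ = M x y u v) :
    Set.BijOn
      (fun p : (X → ℝ) × (Y → ℝ) =>
        ((fun x y => M x y (p.1 x) (p.2 y),
          fun x => Real.exp (-(p.1 x) / T),
          fun y => Real.exp (-(p.2 y) / T)) :
          (X → Y → ℝ) × (X → ℝ) × (Y → ℝ)))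
      -- solutions of the nonlinear Bernstein–Schrödinger system
      {p : (X → ℝ) × (Y → ℝ) |
        (∀ x, Real.exp (-(p.1 x) / T) + ∑ y, M x y (p.1 x) (p.2 y) = n x) ∧
        (∀ y, Real.exp (-(p.2 y) / T) + ∑ x, M x y (p.1 x) (p.2 y) = m y)}
      -- positive solutions of the aggregate matching system
      {q : (X → Y → ℝ) × (X → ℝ) × (Y → ℝ) |
        (∀ x y, 0 < q.1 x y) ∧ (∀ x, 0 < q.2.1 x) ∧ (∀ y, 0 < q.2.2 y) ∧
        (∀ x, q.2.1 x + ∑ y, q.1 x y = n x) ∧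
        (∀ y, q.2.2 y + ∑ x, q.1 x y = m y) ∧
        (∀ x y, Ψ x y (T * Real.log (q.1 x y / q.2.1 x))
          (T * Real.log (q.1 x y / q.2.2 y)) = 0)} := by

  constructor
  · -- MapsTo
    rintro ⟨u, v⟩ ⟨h1, h2⟩
    refine ⟨fun x y => (hM x y (u x) (v y)).1, fun x => Real.exp_pos _,
      fun y => Real.exp_pos _, h1, h2, fun x y => ?_⟩
    have hkey : ∀ (w : ℝ) (μ : ℝ), 0 < μ →
        T * Real.log (μ / Real.exp (-w / T)) = T * Real.log μ + w := by
      intro w μ hμ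
      rw [Real.log_div hμ.ne' (Real.exp_pos _).ne', Real.log_exp]
      field_simp
      ring
    simp only
    rw [hkey (u x) _ (hM x y (u x) (v y)).1, hkey (v y) _ (hM x y (u x) (v y)).1]
    exact (hM x y (u x) (v y)).2
  constructor
  · -- InjOn
    rintro ⟨u, v⟩ _ ⟨u', v'⟩ _ h
    have h2 := congrArg (fun q => q.2.1) h
    have h3 := congrArg (fun q => q.2.2) h
    simp only at h2 h3
    have hu : u = u' := by
      funext x
      have := congrFun h2 x
      have heq : -(u x) / T = -(u' x) / T := Real.exp_injective (congrFun h2 x)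
      field_simp at heq
      exact neg_inj.mp heq
    have hv : v = v' := by
      funext y
      have heq : -(v y) / T = -(v' y) / T := Real.exp_injective (congrFun h3 y)
      field_simp at heq
      exact neg_inj.mp heq
    simp [hu, hv]
  · -- SurjOn
    rintro ⟨μ, a, b⟩ ⟨hμ, ha, hb, hA, hB, hΨ⟩
    refine ⟨(fun x => -T * Real.log (a x), fun y => -T * Real.log (b y)), ?_, ?_⟩
    · -- in source set
      have hMa : ∀ x y, M x y (-T * Real.log (a x)) (-T * Real.log (b y)) = μ x y := by
        intro x y
        refine (hMuniq x y _ _ _ (hμ x y) ?_).symm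
        have h1 : T * Real.log (μ x y) + -T * Real.log (a x)
            = T * Real.log (μ x y / a x) := by
          rw [Real.log_div (hμ x y).ne' (ha x).ne']; ring
        have h2 : T * Real.log (μ x y) + -T * Real.log (b y)
            = T * Real.log (μ x y / b y) := by
          rw [Real.log_div (hμ x y).ne' (hb y).ne']; ring
        rw [h1, h2]; exact hΨ x y
      have hea : ∀ x, Real.exp (-(-T * Real.log (a x)) / T) = a x := by
        intro x
        have : -(-T * Real.log (a x)) / T = Real.log (a x) := by
          field_simp
        rw [this, Real.exp_log (ha x)]
      have heb : ∀ y, Real.exp (-(-T * Real.log (b y)) / T) = b y := by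
        intro y
        have : -(-T * Real.log (b y)) / T = Real.log (b y) := by
          field_simp
        rw [this, Real.exp_log (hb y)]
      constructor
      · intro x; simp only [hea, hMa]; exact hA x
      · intro y; simp only [heb, hMa]; exact hB y
    · -- maps to q
      have hMa : ∀ x y, M x y (-T * Real.log (a x)) (-T * Real.log (b y)) = μ x y := by
        intro x y
        refine (hMuniq x y _ _ _ (hμ x y) ?_).symm
        have h1 : T * Real.log (μ x y) + -T * Real.log (a x)
            = T * Real.log (μ x y / a x) := by
          rw [Real.log_div (hμ x y).ne' (ha x).ne']; ring
        have h2 : T * Real.log (μ x y) + -T * Real.log (b y)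
            = T * Real.log (μ x y / b y) := by
          rw [Real.log_div (hμ x y).ne' (hb y).ne']; ring
        rw [h1, h2]; exact hΨ x y
      simp only [Prod.mk.injEq]
      refine ⟨funext fun x => funext fun y => hMa x y, funext fun x => ?_, funext fun y => ?_⟩
      · have : -(-T * Real.log (a x)) / T = Real.log (a x) := by field_simp
        rw [this, Real.exp_log (ha x)]
      · have : -(-T * Real.log (b y)) / T = Real.log (b y) := by field_simp
        rw [this, Real.exp_log (hb y)]
end

section
/- Let X, Y be finite sets, n : X → ℝ and m : Y → ℝ with positive entries, and T > 0. Suppose each Ψ_{xy} : ℝ × ℝ → ℝ is continuous, jointly strictly increasing, and satisfies, for each fixed value of one argument, Ψ_{xy}(t, r) → +∞ as t → +∞, Ψ_{xy}(t, r) → −∞ as t → −∞, Ψ_{xy}(t, r) → +∞ as r → +∞, and Ψ_{xy}(t, r) → −∞ as r → −∞. Then the aggregate matching system — μ_{x0} + Σ_{y∈Y} μ_{xy} = n_x for all x ∈ X, μ_{0y} + Σ_{x∈X} μ_{xy} = m_y for all y ∈ Y, and Ψ_{xy}(T·log(μ_{xy}/μ_{x0}), T·log(μ_{xy}/μ_{0y}))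 = 0 for all x, y, in unknowns μ_{xy} > 0, μ_{x0} > 0, μ_{0y} > 0 — has a solution; and if moreover each Ψ_{xy} is continuously differentiable, the solution is unique. -/
open Filter Topology

namespace AggMatch
variable {f : ℝ → ℝ → ℝ} {T : ℝ}

lemma mono1 (hc : Continuous fun p : ℝ × ℝ => f p.1 p.2)
    (hs : ∀ t t' r r', t < t' → r < r' → f t r < f t' r')
    {t t' : ℝ} (r : ℝ) (htt : t ≤ t') : f t r ≤ f t' r := by
  rcases eq_or_lt_of_le htt with rfl | h
  · exact le_rfl
  · have hcont : Tendsto (fun s => f t s) (𝓝[<] r) (𝓝 (f t r)) :=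
      ((hc.comp (Continuous.prodMk_right t)).tendsto r).mono_left nhdsWithin_le_nhds
    refine le_of_tendsto hcont ?_
    filter_upwards [self_mem_nhdsWithin] with s hs'
    exact (hs t t' s r h hs').le

lemma mono2 (hc : Continuous fun p : ℝ × ℝ => f p.1 p.2)
    (hs : ∀ t t' r r', t < t' → r < r' → f t r < f t' r')
    (t : ℝ) {r r' : ℝ} (hrr : r ≤ r') : f t r ≤ f t r' := by
  rcases eq_or_lt_of_le hrr with rfl | h
  · exact le_rfl
  · have hcont : Tendsto (fun s => f s r) (𝓝[<] t) (𝓝 (f t r)) :=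
      ((hc.comp (continuous_id.prodMk continuous_const)).tendsto t).mono_left
        nhdsWithin_le_nhds
    refine le_of_tendsto hcont ?_
    filter_upwards [self_mem_nhdsWithin] with s hs'
    exact (hs s t r r' hs' h).le

lemma monoBoth (hc : Continuous fun p : ℝ × ℝ => f p.1 p.2)
    (hs : ∀ t t' r r', t < t' → r < r' → f t r < f t' r')
    {t t' r r' : ℝ} (h1 : t ≤ t') (h2 : r ≤ r') : f t r ≤ f t' r' :=
  (mono1 hc hs r h1).trans (mono2 hc hs t' h2)

lemma comb_top {α : Type*} {l : Filter α}
    (hc : Continuous fun p : ℝ × ℝ => f p.1 p.2)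
    (hs : ∀ t t' r r', t < t' → r < r' → f t r < f t' r')
    (ht1 : ∀ r, Tendsto (fun t => f t r) atTop atTop)
    {u v : α → ℝ} (hu : Tendsto u l atTop) (hv : Tendsto v l atTop) :
    Tendsto (fun s => f (u s) (v s)) l atTop := by
  rw [tendsto_atTop]
  intro C
  obtain ⟨t₀, ht₀⟩ := (tendsto_atTop.1 (ht1 0)) C |>.exists_forall_of_atTop
  filter_upwards [hu.eventually_ge_atTop t₀, hv.eventually_ge_atTop 0] with s h1 h2
  exact (ht₀ _ le_rfl).trans ((monoBoth hc hs (le_refl (u s)) h2).trans' (mono1 hc hs 0 h1))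

lemma comb_bot {α : Type*} {l : Filter α}
    (hc : Continuous fun p : ℝ × ℝ => f p.1 p.2)
    (hs : ∀ t t' r r', t < t' → r < r' → f t r < f t' r')
    (hb1 : ∀ r, Tendsto (fun t => f t r) atBot atBot)
    {u v : α → ℝ} (hu : Tendsto u l atBot) (hv : Tendsto v l atBot) :
    Tendsto (fun s => f (u s) (v s)) l atBot := by
  rw [tendsto_atBot]
  intro C
  obtain ⟨t₀, ht₀⟩ := (tendsto_atBot.1 (hb1 0)) C |>.exists_forall_of_atBot
  filter_upwards [hu.eventually_le_atBot t₀, hv.eventually_le_atBot 0] with s h1 h2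
  exact ((monoBoth hc hs (le_refl (u s)) h2).trans (mono1 hc hs 0 h1)).trans (ht₀ _ le_rfl)

lemma affine_top (hT : 0 < T) (la : ℝ) : Tendsto (fun s : ℝ => T * (s - la)) atTop atTop :=
  (tendsto_atTop_add_const_right atTop (-la) tendsto_id).const_mul_atTop hT

lemma affine_bot (hT : 0 < T) (la : ℝ) : Tendsto (fun s : ℝ => T * (s - la)) atBot atBot :=
  (tendsto_atBot_add_const_right atBot (-la) tendsto_id).const_mul_atBot hT

lemma g_strictMono (hT : 0 < T)
    (hs : ∀ t t' r r', t < t' → r < r' → f t r < f t' r') (la lb : ℝ) :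
    StrictMono fun s => f (T * (s - la)) (T * (s - lb)) := fun s s' hss =>
  hs _ _ _ _ (by nlinarith) (by nlinarith)

lemma g_cont (hc : Continuous fun p : ℝ × ℝ => f p.1 p.2) (la lb : ℝ) :
    Continuous fun s => f (T * (s - la)) (T * (s - lb)) := by
  have h : Continuous fun s : ℝ => ((T * (s - la), T * (s - lb)) : ℝ × ℝ) := by continuity
  exact hc.comp h

lemma root_exists (hT : 0 < T)
    (hc : Continuous fun p : ℝ × ℝ => f p.1 p.2)
    (hs : ∀ t t' r r', t < t' → r < r' → f t r < f t' r')
    (ht1 : ∀ r, Tendsto (fun t => f t r) atTop atTop)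
    (hb1 : ∀ r, Tendsto (fun t => f t r) atBot atBot)
    (la lb : ℝ) :
    ∃! s : ℝ, f (T * (s - la)) (T * (s - lb)) = 0 := by
  obtain ⟨s, hroot⟩ := ((g_cont hc la lb).surjective
    (comb_top hc hs ht1 (affine_top hT la) (affine_top hT lb))
    (comb_bot hc hs hb1 (affine_bot hT la) (affine_bot hT lb))) 0
  exact ⟨s, hroot, fun s' h' => (g_strictMono hT hs la lb).injective (h'.trans hroot.symm)⟩


section sigma
variable {σ : ℝ → ℝ → ℝ}

variable (hT : 0 < T)
  (hc : Continuous fun p : ℝ × ℝ => f p.1 p.2)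
  (hs : ∀ t t' r r', t < t' → r < r' → f t r < f t' r')
  (ht1 : ∀ r, Tendsto (fun t => f t r) atTop atTop)
  (ht2 : ∀ t, Tendsto (fun r => f t r) atTop atTop)
  (hσ : ∀ la lb, f (T * (σ la lb - la)) (T * (σ la lb - lb)) = 0)

include hT hs hσ

lemma σ_le_iff (la lb s : ℝ) : σ la lb ≤ s ↔ 0 ≤ f (T * (s - la)) (T * (s - lb)) := by
  rw [← hσ la lb]
  exact ⟨fun h => (g_strictMono hT hs la lb).le_iff_le.2 h,
    fun h => (g_strictMono hT hs la lb).le_iff_le.1 h⟩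

lemma σ_lt_iff (la lb s : ℝ) : s < σ la lb ↔ f (T * (s - la)) (T * (s - lb)) < 0 := by
  rw [← not_le, σ_le_iff hT hs hσ, not_le]

lemma σ_unique (la lb s : ℝ) (h : f (T * (s - la)) (T * (s - lb)) = 0) : s = σ la lb := by
  exact (g_strictMono hT hs la lb).injective (h.trans (hσ la lb).symm)

include hc in
lemma σ_mono {la la' lb lb' : ℝ} (h1 : la ≤ la') (h2 : lb ≤ lb') : σ la lb ≤ σ la' lb' := by
  rw [σ_le_iff hT hs hσ]
  calc (0:ℝ) = f (T * (σ la' lb' - la')) (T * (σ la' lb' - lb')) := (hσ la' lb').symm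
    _ ≤ _ := monoBoth hc hs (by nlinarith) (by nlinarith)

include hc in
lemma σ_cont1 (lb : ℝ) : Continuous fun la => σ la lb := by
  rw [continuous_iff_continuousAt]
  intro la₀
  rw [ContinuousAt, tendsto_order]
  constructor
  · intro l hl
    have hlt : f (T * (l - la₀)) (T * (l - lb)) < 0 := (σ_lt_iff hT hs hσ la₀ lb l).1 hl
    have hcl : Continuous fun la => f (T * (l - la)) (T * (l - lb)) := by
      have h : Continuous fun la : ℝ => ((T * (l - la), T * (l - lb)) : ℝ × ℝ) := by continuity
      exact hc.comp h
    filter_upwards [(hcl.tendsto la₀).eventually (gt_mem_nhds hlt)] with la hla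
    exact (σ_lt_iff hT hs hσ la lb l).2 hla
  · intro u hu
    have hlt : 0 < f (T * (u - la₀)) (T * (u - lb)) :=
      lt_of_le_of_ne ((σ_le_iff hT hs hσ la₀ lb u).1 hu.le) (by
        intro h; exact absurd (σ_unique hT hs hσ la₀ lb u h.symm) (by intro h'; simp [h'] at hu))
    have hcl : Continuous fun la => f (T * (u - la)) (T * (u - lb)) := by
      have h : Continuous fun la : ℝ => ((T * (u - la), T * (u - lb)) : ℝ × ℝ) := by continuity
      exact hc.comp h
    filter_upwards [(hcl.tendsto la₀).eventually (lt_mem_nhds hlt)] with la hla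
    exact lt_of_le_of_ne ((σ_le_iff hT hs hσ la lb u).2 hla.le) (by
      intro h; rw [← h, hσ la lb] at hla; exact lt_irrefl 0 hla)
include hc in
lemma σ_cont2 (la : ℝ) : Continuous fun lb => σ la lb := by
  rw [continuous_iff_continuousAt]
  intro lb₀
  rw [ContinuousAt, tendsto_order]
  constructor
  · intro l hl
    have hlt : f (T * (l - la)) (T * (l - lb₀)) < 0 := (σ_lt_iff hT hs hσ la lb₀ l).1 hl
    have hcl : Continuous fun lb => f (T * (l - la)) (T * (l - lb)) := by
      have h : Continuous fun lb : ℝ => ((T * (l - la), T * (l - lb)) : ℝ × ℝ) := by continuity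
      exact hc.comp h
    filter_upwards [(hcl.tendsto lb₀).eventually (gt_mem_nhds hlt)] with lb hla
    exact (σ_lt_iff hT hs hσ la lb l).2 hla
  · intro u hu
    have hlt : 0 < f (T * (u - la)) (T * (u - lb₀)) :=
      lt_of_le_of_ne ((σ_le_iff hT hs hσ la lb₀ u).1 hu.le) (by
        intro h; exact absurd (σ_unique hT hs hσ la lb₀ u h.symm) (by intro h'; simp [h'] at hu))
    have hcl : Continuous fun lb => f (T * (u - la)) (T * (u - lb)) := by
      have h : Continuous fun lb : ℝ => ((T * (u - la), T * (u - lb)) : ℝ × ℝ) := by continuity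
      exact hc.comp h
    filter_upwards [(hcl.tendsto lb₀).eventually (lt_mem_nhds hlt)] with lb hla
    exact lt_of_le_of_ne ((σ_le_iff hT hs hσ la lb u).2 hla.le) (by
      intro h; rw [← h, hσ la lb] at hla; exact lt_irrefl 0 hla)

omit hs hσ in
lemma aff_bot_top (C : ℝ) : Tendsto (fun la : ℝ => T * (C - la)) atBot atTop := by
  have h1 : Tendsto (fun la : ℝ => C - la) atBot atTop := by
    simpa [sub_eq_add_neg] using
      tendsto_atTop_add_const_left atBot C tendsto_neg_atBot_atTop
  exact h1.const_mul_atTop hT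

include ht1 in
lemma σ_bot1 (lb : ℝ) : Tendsto (fun la => σ la lb) atBot atBot := by
  rw [tendsto_atBot]
  intro C
  have hcomp : Tendsto (fun la => f (T * (C - la)) (T * (C - lb))) atBot atTop :=
    (ht1 (T * (C - lb))).comp (aff_bot_top hT C)
  filter_upwards [hcomp.eventually_ge_atTop 0] with la hla
  exact (σ_le_iff hT hs hσ la lb C).2 hla

include ht2 in
lemma σ_bot2 (la : ℝ) : Tendsto (fun lb => σ la lb) atBot atBot := by
  rw [tendsto_atBot]
  intro C
  have hcomp : Tendsto (fun lb => f (T * (C - la)) (T * (C - lb))) atBot atTop :=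
    (ht2 (T * (C - la))).comp (aff_bot_top hT C)
  filter_upwards [hcomp.eventually_ge_atTop 0] with lb hla
  exact (σ_le_iff hT hs hσ la lb C).2 hla


end sigma


lemma strictMono_sum_exp {ι : Type*} [Fintype ι] (s : ι → ℝ → ℝ)
    (hmono : ∀ i, Monotone (s i)) :
    StrictMono fun α => Real.exp α + ∑ i, Real.exp (s i α) := by
  intro α β h
  apply add_lt_add_of_lt_of_le (Real.exp_lt_exp.2 h)
  exact Finset.sum_le_sum fun i _ => Real.exp_le_exp.2 (hmono i h.le)

lemma sum_exp_tendsto {ι : Type*} [Fintype ι] (s : ι → ℝ → ℝ)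
    (hbot : ∀ i, Tendsto (s i) atBot atBot) :
    Tendsto (fun α => Real.exp α + ∑ i, Real.exp (s i α)) atBot (𝓝 0) := by
  have h1 : Tendsto (fun α : ℝ => Real.exp α) atBot (𝓝 0) := Real.tendsto_exp_atBot
  have h2 : Tendsto (fun α => ∑ i, Real.exp (s i α)) atBot (𝓝 0) := by
    have := tendsto_finset_sum (Finset.univ : Finset ι)
      (fun i (_ : i ∈ Finset.univ) => Real.tendsto_exp_atBot.comp (hbot i))
    simpa using this
  simpa using h1.add h2

lemma root_sum_exists {ι : Type*} [Fintype ι] (s : ι → ℝ → ℝ)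
    (hmono : ∀ i, Monotone (s i)) (hcont : ∀ i, Continuous (s i))
    (hbot : ∀ i, Tendsto (s i) atBot atBot) {n : ℝ} (hn : 0 < n) :
    ∃! α : ℝ, Real.exp α + ∑ i, Real.exp (s i α) = n := by
  set F : ℝ → ℝ := fun α => Real.exp α + ∑ i, Real.exp (s i α) with hF
  have hFs : StrictMono F := strictMono_sum_exp s hmono
  have hFc : Continuous F := by
    apply Continuous.add Real.continuous_exp
    exact continuous_finset_sum _ fun i _ => Real.continuous_exp.comp (hcont i)
  obtain ⟨α₁, hα₁⟩ := ((sum_exp_tendsto s hbot).eventually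
    (gt_mem_nhds hn)).exists_forall_of_atBot
  have hlo : F (min α₁ (Real.log n)) < n := by
    calc F (min α₁ (Real.log n)) ≤ F α₁ := hFs.monotone (min_le_left _ _)
      _ < n := hα₁ α₁ le_rfl
  have hhi : n ≤ F (Real.log n) := by
    have h0 : 0 ≤ ∑ i, Real.exp (s i (Real.log n)) :=
      Finset.sum_nonneg fun i _ => (Real.exp_pos _).le
    have : F (Real.log n) = n + ∑ i, Real.exp (s i (Real.log n)) := by
      rw [hF]; simp [Real.exp_log hn]
    linarith
  obtain ⟨α, -, hroot⟩ := intermediate_value_Icc (min_le_right α₁ (Real.log n))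
    hFc.continuousOn ⟨hlo.le, hhi⟩
  exact ⟨α, hroot, fun β hβ => hFs.injective (hβ.trans hroot.symm)⟩

/-- Core fixed-point lemma in log coordinates. -/
lemma core {X Y : Type*} [Fintype X] [Fintype Y] (n : X → ℝ) (m : Y → ℝ)
    (hn : ∀ x, 0 < n x) (hm : ∀ y, 0 < m y)
    (σ : X → Y → ℝ → ℝ → ℝ)
    (hmono : ∀ x y (la la' lb lb' : ℝ), la ≤ la' → lb ≤ lb' → σ x y la lb ≤ σ x y la' lb')
    (hcont1 : ∀ x y lb, Continuous fun la => σ x y la lb)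
    (hcont2 : ∀ x y la, Continuous fun lb => σ x y la lb)
    (hbot1 : ∀ x y lb, Tendsto (fun la => σ x y la lb) atBot atBot)
    (hbot2 : ∀ x y la, Tendsto (fun lb => σ x y la lb) atBot atBot) :
    ∃! p : (X → ℝ) × (Y → ℝ),
      (∀ x, Real.exp (p.1 x) + ∑ y, Real.exp (σ x y (p.1 x) (p.2 y)) = n x) ∧
      (∀ y, Real.exp (p.2 y) + ∑ x, Real.exp (σ x y (p.1 x) (p.2 y)) = m y) := by
  classical
  -- the map A : log-b ↦ log-a
  have hAex : ∀ (β : Y → ℝ) (x : X),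
      ∃! α : ℝ, Real.exp α + ∑ y, Real.exp (σ x y α (β y)) = n x := fun β x =>
    root_sum_exists (fun y α => σ x y α (β y))
      (fun y α α' h => hmono x y _ _ _ _ h le_rfl)
      (fun y => hcont1 x y (β y)) (fun y => hbot1 x y (β y)) (hn x)
  choose A hA hAu using fun β x => hAex β x
  have hAanti : ∀ β β' : Y → ℝ, β ≤ β' → ∀ x, A β' x ≤ A β x := by
    intro β β' h x
    by_contra hlt
    push_neg at hlt
    have hstrict := strictMono_sum_exp (fun y α => σ x y α (β y))
      (fun y α α' h => hmono x y _ _ _ _ h le_rfl) hlt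
    have hle : Real.exp (A β' x) + ∑ y, Real.exp (σ x y (A β' x) (β y))
        ≤ Real.exp (A β' x) + ∑ y, Real.exp (σ x y (A β' x) (β' y)) := by
      refine add_le_add le_rfl (Finset.sum_le_sum fun y _ => ?_)
      exact Real.exp_le_exp.2 (hmono x y _ _ _ _ le_rfl (h y))
    have hstrict' : Real.exp (A β x) + ∑ y, Real.exp (σ x y (A β x) (β y))
        < Real.exp (A β' x) + ∑ y, Real.exp (σ x y (A β' x) (β y)) := hstrict
    have hAβ : Real.exp (A β x) + ∑ y, Real.exp (σ x y (A β x) (β y)) = n x := hA β x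
    rw [hA β' x] at hle
    linarith
  have hAle : ∀ (β : Y → ℝ) x, A β x ≤ Real.log (n x) := by
    intro β x
    rw [Real.le_log_iff_exp_le (hn x)]
    have h0 : 0 ≤ ∑ y, Real.exp (σ x y (A β x) (β y)) :=
      Finset.sum_nonneg fun y _ => (Real.exp_pos _).le
    have := hA β x
    linarith
  -- the map Γ : log-b ↦ log-b
  have hGex : ∀ (β : Y → ℝ) (y : Y),
      ∃! ρ : ℝ, Real.exp ρ + ∑ x, Real.exp (σ x y (A β x) ρ) = m y := fun β y =>
    root_sum_exists (fun x ρ => σ x y (A β x) ρ)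
      (fun x ρ ρ' h => hmono x y _ _ _ _ le_rfl h)
      (fun x => hcont2 x y (A β x)) (fun x => hbot2 x y (A β x)) (hm y)
  choose Γ hΓ hΓu using fun β y => hGex β y
  have hΓmono : ∀ β β' : Y → ℝ, β ≤ β' → ∀ y, Γ β y ≤ Γ β' y := by
    intro β β' h y
    by_contra hlt
    push_neg at hlt
    have hstrict := strictMono_sum_exp (fun x ρ => σ x y (A β x) ρ)
      (fun x ρ ρ' h => hmono x y _ _ _ _ le_rfl h) hlt
    have hle : Real.exp (Γ β' y) + ∑ x, Real.exp (σ x y (A β x) (Γ β' y))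
        ≥ Real.exp (Γ β' y) + ∑ x, Real.exp (σ x y (A β' x) (Γ β' y)) := by
      refine add_le_add le_rfl (Finset.sum_le_sum fun x _ => ?_)
      exact Real.exp_le_exp.2 (hmono x y _ _ _ _ (hAanti β β' h x) le_rfl)
    have hstrict' : Real.exp (Γ β' y) + ∑ x, Real.exp (σ x y (A β x) (Γ β' y))
        < Real.exp (Γ β y) + ∑ x, Real.exp (σ x y (A β x) (Γ β y)) := hstrict
    have hΓβ : Real.exp (Γ β y) + ∑ x, Real.exp (σ x y (A β x) (Γ β y)) = m y := hΓ β y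
    rw [hΓ β' y] at hle
    linarith
  have hΓle : ∀ (β : Y → ℝ) y, Γ β y ≤ Real.log (m y) := by
    intro β y
    rw [Real.le_log_iff_exp_le (hm y)]
    have h0 : 0 ≤ ∑ x, Real.exp (σ x y (A β x) (Γ β y)) :=
      Finset.sum_nonneg fun x _ => (Real.exp_pos _).le
    have := hΓ β y
    linarith
  -- lower corner γ
  have hγex : ∀ y : Y, ∃ g : ℝ,
      Real.exp g + ∑ x, Real.exp (σ x y (Real.log (n x)) g) < m y := by
    intro y
    exact ((sum_exp_tendsto (fun x ρ => σ x y (Real.log (n x)) ρ)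
      (fun x => hbot2 x y _)).eventually (gt_mem_nhds (hm y))).exists
  choose γ hγ using hγex
  have hγΓ : ∀ (β : Y → ℝ) y, γ y ≤ Γ β y := by
    intro β y
    by_contra hlt
    push_neg at hlt
    have h1 : Real.exp (Γ β y) + ∑ x, Real.exp (σ x y (A β x) (Γ β y))
        < Real.exp (γ y) + ∑ x, Real.exp (σ x y (Real.log (n x)) (γ y)) := by
      apply add_lt_add_of_lt_of_le (Real.exp_lt_exp.2 hlt)
      exact Finset.sum_le_sum fun x _ =>
        Real.exp_le_exp.2 (hmono x y _ _ _ _ (hAle β x) hlt.le)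
    rw [hΓ β y] at h1
    exact absurd (h1.trans (hγ y)) (lt_irrefl _)
  -- Tarski
  set S : Set (Y → ℝ) :=
    {β | (∀ y, β y ≤ Real.log (m y)) ∧ ∀ y, β y ≤ Γ β y} with hS
  set p : Y → ℝ := fun y => sSup ((fun β => β y) '' S) with hp
  have hγS : γ ∈ S := by
    refine ⟨fun y => ?_, fun y => (hγΓ γ y)⟩
    have := hγ y
    have h0 : 0 ≤ ∑ x, Real.exp (σ x y (Real.log (n x)) (γ y)) :=
      Finset.sum_nonneg fun x _ => (Real.exp_pos _).le
    rw [Real.le_log_iff_exp_le (hm y)]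
    linarith
  have hne : ∀ y, ((fun β => β y) '' S).Nonempty := fun y => ⟨γ y, γ, hγS, rfl⟩
  have hbdd : ∀ y, BddAbove ((fun β => β y) '' S) := by
    intro y
    refine ⟨Real.log (m y), ?_⟩
    rintro v ⟨β, hβ, rfl⟩
    exact hβ.1 y
  have hlep : ∀ β ∈ S, β ≤ p := fun β hβ y => le_csSup (hbdd y) ⟨β, hβ, rfl⟩
  have hpΓ : p ≤ Γ p := by
    intro y
    apply csSup_le (hne y)
    rintro v ⟨β, hβ, rfl⟩
    exact (hβ.2 y).trans (hΓmono β p (hlep β hβ) y)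
  have hΓpS : Γ p ∈ S := ⟨fun y => hΓle p y, fun y => hΓmono p (Γ p) hpΓ y⟩
  have hfix : ∀ y, Γ p y = p y := fun y => le_antisymm (hlep (Γ p) hΓpS y) (hpΓ y)
  -- the canonical solution
  refine ⟨(A p, p), ⟨fun x => hA p x, fun y => ?_⟩, ?_⟩
  · have := hΓ p y
    rwa [hfix y] at this
  -- uniqueness
  rintro ⟨qa, qb⟩ ⟨hq1, hq2⟩
  have hqa : ∀ x, qa x = A qb x := fun x => hAu qb x (qa x) (hq1 x)
  have hq2' : ∀ y, Real.exp (qb y) + ∑ x, Real.exp (σ x y (A qb x) (qb y)) = m y := by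
    intro y
    have := hq2 y
    rwa [show (∑ x, Real.exp (σ x y (qa x) (qb y)))
        = ∑ x, Real.exp (σ x y (A qb x) (qb y)) from
      Finset.sum_congr rfl fun x _ => by rw [hqa x]] at this
  have hqfix : ∀ y, qb y = Γ qb y := fun y => hΓu qb y (qb y) (hq2' y)
  have hqS : qb ∈ S := by
    refine ⟨fun y => ?_, fun y => (hqfix y).le⟩
    rw [Real.le_log_iff_exp_le (hm y)]
    have h0 : 0 ≤ ∑ x, Real.exp (σ x y (A qb x) (qb y)) :=
      Finset.sum_nonneg fun x _ => (Real.exp_pos _).le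
    have := hq2' y
    linarith
  have hqle : qb ≤ p := hlep qb hqS
  -- sum comparison argument
  have hqp : qb = p := by
    by_contra hne'
    have hex : ∃ y₀, qb y₀ < p y₀ := by
      by_contra hall
      push_neg at hall
      exact hne' (funext fun y => le_antisymm (hqle y) (hall y))
    obtain ⟨y₀, hy₀⟩ := hex
    have hSlt : ∑ y, Real.exp (qb y) < ∑ y, Real.exp (p y) :=
      Finset.sum_lt_sum (fun y _ => Real.exp_le_exp.2 (hqle y))
        ⟨y₀, Finset.mem_univ _, Real.exp_lt_exp.2 hy₀⟩
    have hEq1 : (∑ y, Real.exp (qb y)) + ∑ y, ∑ x, Real.exp (σ x y (A qb x) (qb y))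
        = ∑ y, m y := by
      rw [← Finset.sum_add_distrib]
      exact Finset.sum_congr rfl fun y _ => hq2' y
    have hEq2 : (∑ y, Real.exp (p y)) + ∑ y, ∑ x, Real.exp (σ x y (A p x) (p y))
        = ∑ y, m y := by
      rw [← Finset.sum_add_distrib]
      refine Finset.sum_congr rfl fun y _ => ?_
      have := hΓ p y
      rwa [hfix y] at this
    have hEq3 : (∑ x, Real.exp (A qb x)) + ∑ y, ∑ x, Real.exp (σ x y (A qb x) (qb y))
        = ∑ x, n x := by
      rw [Finset.sum_comm, ← Finset.sum_add_distrib]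
      exact Finset.sum_congr rfl fun x _ => hA qb x
    have hEq4 : (∑ x, Real.exp (A p x)) + ∑ y, ∑ x, Real.exp (σ x y (A p x) (p y))
        = ∑ x, n x := by
      rw [Finset.sum_comm, ← Finset.sum_add_distrib]
      exact Finset.sum_congr rfl fun x _ => hA p x
    have hAcomp : ∑ x, Real.exp (A p x) ≤ ∑ x, Real.exp (A qb x) :=
      Finset.sum_le_sum fun x _ => Real.exp_le_exp.2 (hAanti qb p hqle x)
    linarith
  have hqaA : qa = A p := by rw [funext hqa, hqp]
  rw [hqaA, hqp]

end AggMatch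

/-- Existence of a positive solution of the aggregate matching system, and its
uniqueness when each `Ψ_{xy}` is continuously differentiable. -/
theorem aggregate_matching_system_solution
    {X Y : Type*} [Fintype X] [Fintype Y]
    (n : X → ℝ) (m : Y → ℝ) (hn : ∀ x, 0 < n x) (hm : ∀ y, 0 < m y)
    (T : ℝ) (hT : 0 < T)
    (Ψ : X → Y → ℝ → ℝ → ℝ)
    (hcont : ∀ x y, Continuous fun p : ℝ × ℝ => Ψ x y p.1 p.2)
    (hstrict : ∀ x y (t t' r r' : ℝ), t < t' → r < r' → Ψ x y t r < Ψ x y t' r')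
    -- limits in each argument, the other being fixed
    (htop₁ : ∀ x y (r : ℝ), Tendsto (fun t => Ψ x y t r) atTop atTop)
    (hbot₁ : ∀ x y (r : ℝ), Tendsto (fun t => Ψ x y t r) atBot atBot)
    (htop₂ : ∀ x y (t : ℝ), Tendsto (fun r => Ψ x y t r) atTop atTop)
    (hbot₂ : ∀ x y (t : ℝ), Tendsto (fun r => Ψ x y t r) atBot atBot) :
    (∃ (μ : X → Y → ℝ) (a : X → ℝ) (b : Y → ℝ),
      (∀ x y, 0 < μ x y) ∧ (∀ x, 0 < a x) ∧ (∀ y, 0 < b y) ∧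
      (∀ x, a x + ∑ y, μ x y = n x) ∧
      (∀ y, b y + ∑ x, μ x y = m y) ∧
      (∀ x y, Ψ x y (T * Real.log (μ x y / a x)) (T * Real.log (μ x y / b y)) = 0)) ∧
    ((∀ x y, ContDiff ℝ 1 fun p : ℝ × ℝ => Ψ x y p.1 p.2) →
      ∀ (μ μ' : X → Y → ℝ) (a a' : X → ℝ) (b b' : Y → ℝ),
        (∀ x y, 0 < μ x y) → (∀ x, 0 < a x) → (∀ y, 0 < b y) →
        (∀ x, a x + ∑ y, μ x y = n x) →
        (∀ y, b y + ∑ x, μ x y = m y) →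
        (∀ x y, Ψ x y (T * Real.log (μ x y / a x)) (T * Real.log (μ x y / b y)) = 0) →
        (∀ x y, 0 < μ' x y) → (∀ x, 0 < a' x) → (∀ y, 0 < b' y) →
        (∀ x, a' x + ∑ y, μ' x y = n x) →
        (∀ y, b' y + ∑ x, μ' x y = m y) →
        (∀ x y, Ψ x y (T * Real.log (μ' x y / a' x)) (T * Real.log (μ' x y / b' y)) = 0) →
        μ = μ' ∧ a = a' ∧ b = b') := by
  classical
  choose σ hσ hσu using fun x y la lb =>
    AggMatch.root_exists hT (hcont x y) (hstrict x y) (htop₁ x y) (hbot₁ x y) la lb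
  have hσmono : ∀ x y (la la' lb lb' : ℝ), la ≤ la' → lb ≤ lb' →
      σ x y la lb ≤ σ x y la' lb' := fun x y la la' lb lb' h1 h2 =>
    AggMatch.σ_mono hT (hcont x y) (hstrict x y) (hσ x y) h1 h2
  have hσcont1 : ∀ x y lb, Continuous fun la => σ x y la lb := fun x y lb =>
    AggMatch.σ_cont1 hT (hcont x y) (hstrict x y) (hσ x y) lb
  have hσcont2 : ∀ x y la, Continuous fun lb => σ x y la lb := fun x y la =>
    AggMatch.σ_cont2 hT (hcont x y) (hstrict x y) (hσ x y) la
  have hσbot1 : ∀ x y lb, Tendsto (fun la => σ x y la lb) atBot atBot := fun x y lb =>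
    AggMatch.σ_bot1 hT (hstrict x y) (htop₁ x y) (hσ x y) lb
  have hσbot2 : ∀ x y la, Tendsto (fun lb => σ x y la lb) atBot atBot := fun x y la =>
    AggMatch.σ_bot2 hT (hstrict x y) (htop₂ x y) (hσ x y) la
  obtain ⟨⟨α, β⟩, ⟨hpx, hpy⟩, huniq⟩ :=
    AggMatch.core n m hn hm σ hσmono hσcont1 hσcont2 hσbot1 hσbot2
  have hlogdiv : ∀ (s t : ℝ), Real.log (Real.exp s / Real.exp t) = s - t := by
    intro s t
    rw [← Real.exp_sub, Real.log_exp]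
  have key : ∀ (μ : X → Y → ℝ) (a : X → ℝ) (b : Y → ℝ),
      (∀ x y, 0 < μ x y) → (∀ x, 0 < a x) → (∀ y, 0 < b y) →
      (∀ x, a x + ∑ y, μ x y = n x) →
      (∀ y, b y + ∑ x, μ x y = m y) →
      (∀ x y, Ψ x y (T * Real.log (μ x y / a x)) (T * Real.log (μ x y / b y)) = 0) →
      (∀ x, a x = Real.exp (α x)) ∧ (∀ y, b y = Real.exp (β y)) ∧
        (∀ x y, μ x y = Real.exp (σ x y (α x) (β y))) := by
    intro μ a b hμ ha hb he1 he2 he3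
    have hμσ : ∀ x y, μ x y = Real.exp (σ x y (Real.log (a x)) (Real.log (b y))) := by
      intro x y
      have h3 := he3 x y
      rw [Real.log_div (ne_of_gt (hμ x y)) (ne_of_gt (ha x)),
        Real.log_div (ne_of_gt (hμ x y)) (ne_of_gt (hb y))] at h3
      have := hσu x y (Real.log (a x)) (Real.log (b y)) (Real.log (μ x y)) h3
      rw [← this, Real.exp_log (hμ x y)]
    have hcore : (∀ x, Real.exp (Real.log (a x)) +
          ∑ y, Real.exp (σ x y (Real.log (a x)) (Real.log (b y))) = n x) ∧
        (∀ y, Real.exp (Real.log (b y)) +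
          ∑ x, Real.exp (σ x y (Real.log (a x)) (Real.log (b y))) = m y) := by
      constructor
      · intro x
        rw [Real.exp_log (ha x), ← he1 x]
        congr 1
        exact Finset.sum_congr rfl fun y _ => (hμσ x y).symm
      · intro y
        rw [Real.exp_log (hb y), ← he2 y]
        congr 1
        exact Finset.sum_congr rfl fun x _ => (hμσ x y).symm
    have heq := huniq (fun x => Real.log (a x), fun y => Real.log (b y)) hcore
    have heqa : ∀ x, Real.log (a x) = α x := fun x => congrFun (congrArg Prod.fst heq) x
    have heqb : ∀ y, Real.log (b y) = β y := fun y => congrFun (congrArg Prod.snd heq) y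
    refine ⟨fun x => by rw [← heqa x, Real.exp_log (ha x)],
      fun y => by rw [← heqb y, Real.exp_log (hb y)], fun x y => by
        rw [hμσ x y, heqa x, heqb y]⟩
  constructor
  · refine ⟨fun x y => Real.exp (σ x y (α x) (β y)), fun x => Real.exp (α x),
      fun y => Real.exp (β y), fun x y => Real.exp_pos _, fun x => Real.exp_pos _,
      fun y => Real.exp_pos _, hpx, hpy, fun x y => ?_⟩
    rw [hlogdiv, hlogdiv]
    exact hσ x y (α x) (β y)
  · intro _ μ μ' a a' b b' hμ ha hb he1 he2 he3 hμ' ha' hb' he1' he2' he3'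
    obtain ⟨k1, k2, k3⟩ := key μ a b hμ ha hb he1 he2 he3
    obtain ⟨k1', k2', k3'⟩ := key μ' a' b' hμ' ha' hb' he1' he2' he3'
    refine ⟨funext fun x => funext fun y => ?_, funext fun x => ?_, funext fun y => ?_⟩
    · rw [k3 x y, k3' x y]
    · rw [k1 x, k1' x]
    · rw [k2 y, k2' y]
end
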